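/- arXiv:1909.13549 — 4 statements merged into one kernel-verified Lean document; each statement's English description precedes it below -/
import Mathlib

section
/- There exist constants c > 0 and L₀ > 0 depending only on f such that for every real L ≥ L₀, all integers a, b with 1 ≤ b < a, and every real number y, one has ∫₀^L sin²(π(b/a − P(u)·y)) du ≥ c·L/a², where P(u) denotes the evaluation of the polynomial P at the real number u. -/
open Polynomial Filter Real Set intervalIntegral




namespace Stmt7Aux

lemma ev_pos (T : Polynomial ℝ) (hT : 0 < T.leadingCoeff) :
    ∀ᶠ x in atTop, 0 < T.eval x := by
  rcases Nat.eq_zero_or_pos T.natDegree with h0 | hpos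
  · obtain ⟨a, rfl⟩ := Polynomial.natDegree_eq_zero.mp h0
    rw [Polynomial.leadingCoeff_C] at hT
    filter_upwards with x
    simpa using hT
  · have hdeg : 0 < T.degree := Polynomial.natDegree_pos_iff_degree_pos.mp hpos
    exact (Polynomial.tendsto_atTop_of_leadingCoeff_nonneg T hdeg hT.le).eventually_gt_atTop 0

lemma ev_pos' (T : Polynomial ℝ) (n : ℕ) (hle : T.natDegree ≤ n) (hc : 0 < T.coeff n) :
    ∀ᶠ x in atTop, 0 < T.eval x := by
  have hnd : T.natDegree = n := le_antisymm hle (Polynomial.le_natDegree_of_ne_zero hc.ne')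
  exact ev_pos T (by rwa [Polynomial.leadingCoeff, hnd])

lemma ev_nonneg (T : Polynomial ℝ) (hT : 0 ≤ T.leadingCoeff) :
    ∀ᶠ x in atTop, 0 ≤ T.eval x := by
  rcases eq_or_lt_of_le hT with h0 | hpos
  · have : T = 0 := Polynomial.leadingCoeff_eq_zero.mp h0.symm
    simp [this]
  · filter_upwards [ev_pos T hpos] with x hx using hx.le

lemma lc_deriv_nonneg (T : Polynomial ℝ) (hT : 0 ≤ T.leadingCoeff) :
    0 ≤ (Polynomial.derivative T).leadingCoeff := by
  rcases Nat.eq_zero_or_pos T.natDegree with h0 | hpos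
  · rw [Polynomial.derivative_of_natDegree_zero h0]; simp
  · have hd := Polynomial.degree_derivative_eq T hpos
    have hnd : (Polynomial.derivative T).natDegree = T.natDegree - 1 :=
      Polynomial.natDegree_eq_of_degree_eq_some hd
    rw [Polynomial.leadingCoeff, hnd, Polynomial.coeff_derivative]
    have h1 : T.coeff (T.natDegree - 1 + 1) = T.leadingCoeff := by
      rw [Nat.sub_add_cancel hpos]; rfl
    rw [h1]
    have : (0:ℝ) ≤ ((T.natDegree - 1 : ℕ) : ℝ) + 1 := by positivity
    exact mul_nonneg hT this

lemma two_mul_le_sin {e : ℝ} (h0 : 0 ≤ e) (h1 : e ≤ 1/2) :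
    2 * e ≤ Real.sin (Real.pi * e) := by
  have hpi := Real.pi_pos
  have h := Real.mul_le_sin (x := Real.pi * e) (by positivity) (by nlinarith)
  calc 2 * e = 2 / Real.pi * (Real.pi * e) := by field_simp
  _ ≤ Real.sin (Real.pi * e) := h

lemma sin_sq_ge (x d : ℝ) (hd : 0 ≤ d) (h : ∀ k : ℤ, d ≤ |x - k|) :
    4 * d ^ 2 ≤ Real.sin (Real.pi * x) ^ 2 := by
  set n : ℤ := round x with hn
  set e : ℝ := x - n with he
  have he2 : |e| ≤ 1 / 2 := abs_sub_round x
  have hde : d ≤ |e| := h n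
  have hsin : Real.sin (Real.pi * x) ^ 2 = Real.sin (Real.pi * e) ^ 2 := by
    have hx : Real.pi * x = Real.pi * e + n * Real.pi := by rw [he]; ring
    have hcos : Real.cos ((n : ℝ) * Real.pi) ^ 2 = 1 := by
      have h1 := Real.sin_sq_add_cos_sq ((n : ℝ) * Real.pi)
      rw [Real.sin_int_mul_pi] at h1
      nlinarith
    rw [hx, Real.sin_add, Real.sin_int_mul_pi, mul_zero, add_zero, mul_pow, hcos, mul_one]
  have habs : Real.sin (Real.pi * |e|) ^ 2 = Real.sin (Real.pi * e) ^ 2 := by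
    rcases abs_cases e with ⟨h1, _⟩ | ⟨h1, _⟩
    · rw [h1]
    · rw [h1, mul_neg, Real.sin_neg, neg_sq]
  have hj : 2 * |e| ≤ Real.sin (Real.pi * |e|) := two_mul_le_sin (abs_nonneg e) he2
  have hnn : 0 ≤ Real.sin (Real.pi * |e|) := le_trans (by positivity) hj
  rw [hsin, ← habs]
  nlinarith

lemma sin_sq_pair (x d : ℝ) :
    Real.sin d ^ 2 / 2 ≤ Real.sin x ^ 2 + Real.sin (x + d) ^ 2 := by
  have key : Real.sin d = Real.sin (x + d) * Real.cos x - Real.cos (x + d) * Real.sin x := by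
    have h := Real.sin_sub (x + d) x
    simpa using h
  have habs : |Real.sin d| ≤ |Real.sin (x + d)| + |Real.sin x| := by
    rw [key, sub_eq_add_neg]
    refine (abs_add_le _ _).trans ?_
    rw [abs_neg, abs_mul, abs_mul]
    have c1 : |Real.cos x| ≤ 1 := Real.abs_cos_le_one x
    have c2 : |Real.cos (x + d)| ≤ 1 := Real.abs_cos_le_one (x + d)
    have := abs_nonneg (Real.sin (x + d))
    have := abs_nonneg (Real.sin x)
    nlinarith
  have h2 : Real.sin d ^ 2 ≤ (|Real.sin (x + d)| + |Real.sin x|) ^ 2 := by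
    have := abs_nonneg (Real.sin d)
    nlinarith [sq_abs (Real.sin d)]
  nlinarith [sq_nonneg (|Real.sin (x + d)| - |Real.sin x|), sq_abs (Real.sin (x + d)), sq_abs (Real.sin x)]

lemma F_hasDeriv (t : ℝ) :
    HasDerivAt (fun t : ℝ => t / 2 - Real.sin (2 * Real.pi * t) / (4 * Real.pi))
      (Real.sin (Real.pi * t) ^ 2) t := by
  have h1 : HasDerivAt (fun t : ℝ => t / 2) (1 / 2) t := (hasDerivAt_id t).div_const 2
  have h3 : HasDerivAt (fun t : ℝ => 2 * Real.pi * t) (2 * Real.pi) t := by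
    simpa using (hasDerivAt_id t).const_mul (2 * Real.pi)
  have h2 : HasDerivAt (fun t : ℝ => Real.sin (2 * Real.pi * t))
      (Real.cos (2 * Real.pi * t) * (2 * Real.pi)) t :=
    (Real.hasDerivAt_sin _).comp t h3
  have h := h1.sub (h2.div_const (4 * Real.pi))
  convert h using 1
  case e'_4 => rfl
  case e'_5 => rfl
  case e'_8 => rfl
  have hcos : Real.cos (2 * (Real.pi * t)) = 2 * Real.cos (Real.pi * t) ^ 2 - 1 :=
    Real.cos_two_mul _
  have hpy := Real.sin_sq_add_cos_sq (Real.pi * t)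
  have hpi := Real.pi_ne_zero
  have harg : 2 * (Real.pi * t) = 2 * Real.pi * t := by ring
  rw [harg] at hcos
  have hsin : Real.sin (Real.pi * t) ^ 2 = 1 / 2 - Real.cos (2 * Real.pi * t) / 2 := by
    linarith
  rw [hsin]
  field_simp
  ring

lemma S_int (T₁ T₂ : ℝ) :
    ∫ t in T₁..T₂, Real.sin (Real.pi * t) ^ 2
      = (T₂ - T₁) / 2 - (Real.sin (2 * Real.pi * T₂) - Real.sin (2 * Real.pi * T₁)) / (4 * Real.pi) := by
  rw [intervalIntegral.integral_eq_sub_of_hasDerivAt (fun t _ => F_hasDeriv t)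
    (Continuous.intervalIntegrable (by fun_prop) _ _)]
  ring

lemma S_lb1 {T₁ T₂ : ℝ} (h : 1 ≤ T₂ - T₁) :
    (T₂ - T₁) / 4 ≤ ∫ t in T₁..T₂, Real.sin (Real.pi * t) ^ 2 := by
  rw [S_int]
  have hpi := Real.pi_gt_three
  have s1 : Real.sin (2 * Real.pi * T₂) ≤ 1 := Real.sin_le_one _
  have s2 : -1 ≤ Real.sin (2 * Real.pi * T₁) := Real.neg_one_le_sin _
  have h6 : (Real.sin (2 * Real.pi * T₂) - Real.sin (2 * Real.pi * T₁)) / (4 * Real.pi) ≤ 1 / 6 := by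
    rw [div_le_iff₀ (by positivity)]
    nlinarith
  linarith

lemma S_lb2 {T₁ T₂ : ℝ} (h0 : 0 ≤ T₂ - T₁) (h1 : T₂ - T₁ ≤ 1) :
    (T₂ - T₁) ^ 3 / 8 ≤ ∫ t in T₁..T₂, Real.sin (Real.pi * t) ^ 2 := by
  set V := T₂ - T₁ with hV
  have hcont : Continuous fun t : ℝ => Real.sin (Real.pi * t) ^ 2 := by fun_prop
  have hi1 : IntervalIntegrable (fun t : ℝ => Real.sin (Real.pi * t) ^ 2) MeasureTheory.volume T₁ (T₁ + V / 2) :=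
    hcont.intervalIntegrable _ _
  have hi2 : IntervalIntegrable (fun t : ℝ => Real.sin (Real.pi * t) ^ 2) MeasureTheory.volume (T₁ + V / 2) T₂ :=
    hcont.intervalIntegrable _ _
  have hsplit : (∫ t in T₁..(T₁ + V / 2), Real.sin (Real.pi * t) ^ 2)
      + (∫ t in (T₁ + V / 2)..T₂, Real.sin (Real.pi * t) ^ 2)
      = ∫ t in T₁..T₂, Real.sin (Real.pi * t) ^ 2 :=
    intervalIntegral.integral_add_adjacent_intervals hi1 hi2
  have hshift : (∫ t in (T₁ + V / 2)..T₂, Real.sin (Real.pi * t) ^ 2)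
      = ∫ t in T₁..(T₁ + V / 2), Real.sin (Real.pi * (t + V / 2)) ^ 2 := by
    rw [intervalIntegral.integral_comp_add_right (fun t => Real.sin (Real.pi * t) ^ 2) (V / 2)]
    congr 1
    rw [hV]; ring
  have hpoint : ∀ t ∈ Set.Icc T₁ (T₁ + V / 2),
      Real.sin (Real.pi * (V / 2)) ^ 2 / 2
        ≤ Real.sin (Real.pi * t) ^ 2 + Real.sin (Real.pi * (t + V / 2)) ^ 2 := by
    intro t _
    have := sin_sq_pair (Real.pi * t) (Real.pi * (V / 2))
    have harg : Real.pi * t + Real.pi * (V / 2) = Real.pi * (t + V / 2) := by ring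
    rwa [harg] at this
  have hmono : (V / 2) * (Real.sin (Real.pi * (V / 2)) ^ 2 / 2)
      ≤ ∫ t in T₁..(T₁ + V / 2), (Real.sin (Real.pi * t) ^ 2 + Real.sin (Real.pi * (t + V / 2)) ^ 2) := by
    have hconst : (∫ _t in T₁..(T₁ + V / 2), (Real.sin (Real.pi * (V / 2)) ^ 2 / 2))
        = (V / 2) * (Real.sin (Real.pi * (V / 2)) ^ 2 / 2) := by
      rw [intervalIntegral.integral_const]
      simp [smul_eq_mul]
    rw [← hconst]
    apply intervalIntegral.integral_mono_on (by linarith)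
      (intervalIntegrable_const) ((hcont.add (by fun_prop)).intervalIntegrable _ _) hpoint
  have hadd : (∫ t in T₁..(T₁ + V / 2), (Real.sin (Real.pi * t) ^ 2 + Real.sin (Real.pi * (t + V / 2)) ^ 2))
      = (∫ t in T₁..(T₁ + V / 2), Real.sin (Real.pi * t) ^ 2)
        + ∫ t in T₁..(T₁ + V / 2), Real.sin (Real.pi * (t + V / 2)) ^ 2 :=
    intervalIntegral.integral_add (hcont.intervalIntegrable _ _) ((by fun_prop : Continuous fun t : ℝ => Real.sin (Real.pi * (t + V / 2)) ^ 2).intervalIntegrable _ _)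
  have hjordan : V ≤ Real.sin (Real.pi * (V / 2)) := by
    have := two_mul_le_sin (e := V / 2) (by linarith) (by linarith)
    linarith
  have hVnn : 0 ≤ Real.sin (Real.pi * (V / 2)) := le_trans (by linarith) hjordan
  have hsq : V ^ 2 ≤ Real.sin (Real.pi * (V / 2)) ^ 2 := by nlinarith
  calc V ^ 3 / 8 ≤ (V / 2) * (Real.sin (Real.pi * (V / 2)) ^ 2 / 2) := by nlinarith
  _ ≤ ∫ t in T₁..(T₁ + V / 2), (Real.sin (Real.pi * t) ^ 2 + Real.sin (Real.pi * (t + V / 2)) ^ 2) := hmono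
  _ = ∫ t in T₁..T₂, Real.sin (Real.pi * t) ^ 2 := by rw [hadd, ← hshift, hsplit]

end Stmt7Aux



open Stmt7Aux MeasureTheory

set_option maxHeartbeats 1600000 in
theorem stmt7 (r : ℕ) (hr : 1 ≤ r) (P : Polynomial ℚ) (hPdeg : P.natDegree = r)
    (hPlc : 0 < P.leadingCoeff)
    (f : ℤ → ℤ) (hfP : ∀ ℓ : ℤ, (f ℓ : ℚ) = P.eval (ℓ : ℚ))
    (hfpos : ∀ ℓ : ℤ, 1 ≤ ℓ → 0 < f ℓ)
    (hfprime : ∀ p : ℕ, p.Prime → ∃ ℓ : ℤ, ¬ ((p : ℤ) ∣ f ℓ)) :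
    ∃ c L₀ : ℝ, 0 < c ∧ 0 < L₀ ∧
      ∀ L : ℝ, L₀ ≤ L → ∀ a b : ℤ, 1 ≤ b → b < a → ∀ y : ℝ,
        c * L / (a : ℝ) ^ 2 ≤
          ∫ u in (0 : ℝ)..L,
            Real.sin (Real.pi * ((b : ℝ) / (a : ℝ) - Polynomial.aeval u P * y)) ^ 2 := by
  clear hfP hfpos hfprime
  -- pass to the real polynomial
  set Q : Polynomial ℝ := P.map (algebraMap ℚ ℝ) with hQdef
  have hinj : Function.Injective (algebraMap ℚ ℝ) := (algebraMap ℚ ℝ).injective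
  have hQdeg : Q.natDegree = r := by
    rw [hQdef, Polynomial.natDegree_map_eq_of_injective hinj, hPdeg]
  have hQlc : 0 < Q.leadingCoeff := by
    rw [hQdef, Polynomial.leadingCoeff_map_of_injective hinj, eq_ratCast]
    exact_mod_cast hPlc
  have haev : ∀ u : ℝ, (Polynomial.aeval u) P = Q.eval u := by
    intro u
    rw [hQdef, Polynomial.eval_map, Polynomial.aeval_def]
  set c0 : ℝ := Q.leadingCoeff with hc0def
  set Q' : Polynomial ℝ := Polynomial.derivative Q with hQ'def
  have hQ'coeff : Q'.coeff (r - 1) = c0 * r := by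
    rw [hQ'def, Polynomial.coeff_derivative]
    have h1 : r - 1 + 1 = r := Nat.sub_add_cancel hr
    rw [h1]
    have h2 : Q.coeff r = c0 := by rw [hc0def, Polynomial.leadingCoeff, hQdeg]
    rw [h2]
    have h3 : ((r - 1 : ℕ) : ℝ) + 1 = (r : ℝ) := by exact_mod_cast h1
    rw [h3]
  have hrR : (0:ℝ) < r := by exact_mod_cast hr
  have hQ'deg : Q'.natDegree = r - 1 := by
    refine le_antisymm ?_ ?_
    · rw [hQ'def]
      exact (Polynomial.natDegree_derivative_le Q).trans (by rw [hQdeg])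
    · apply Polynomial.le_natDegree_of_ne_zero
      rw [hQ'coeff]
      positivity
  have hQ'lc : 0 < Q'.leadingCoeff := by
    rw [Polynomial.leadingCoeff, hQ'deg, hQ'coeff]
    positivity
  -- the half-scaled polynomial
  set Qh : Polynomial ℝ := Q.comp (Polynomial.C (1/2 : ℝ) * Polynomial.X) with hQhdef
  have hXdeg : (Polynomial.C (1/2 : ℝ) * Polynomial.X).natDegree = 1 :=
    Polynomial.natDegree_C_mul_X _ (by norm_num)
  have hQh_eval : ∀ x : ℝ, Qh.eval x = Q.eval (x / 2) := by
    intro x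
    rw [hQhdef, Polynomial.eval_comp]
    congr 1
    simp
    ring
  have hQh_deg : Qh.natDegree = r := by
    rw [hQhdef, Polynomial.natDegree_comp, hXdeg, hQdeg, mul_one]
  have hQh_coeff : Qh.coeff r = c0 * (1/2 : ℝ) ^ r := by
    have h1 : Qh.coeff r = Qh.leadingCoeff := by rw [Polynomial.leadingCoeff, hQh_deg]
    rw [h1, hQhdef, Polynomial.leadingCoeff_comp (by rw [hXdeg]; norm_num),
      Polynomial.leadingCoeff_C_mul_X, hQdeg]
  -- constants
  obtain ⟨ρ, hρdef⟩ : ∃ ρ : ℝ, ρ = 1 - (1/2 : ℝ) ^ r := ⟨_, rfl⟩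
  have hhalf : (1/2 : ℝ) ^ r ≤ 1/2 := by
    calc (1/2 : ℝ) ^ r ≤ (1/2 : ℝ) ^ 1 := by
          apply pow_le_pow_of_le_one (by norm_num) (by norm_num) hr
    _ = 1/2 := pow_one _
  have hρpos : 0 < ρ := by
    have : (0:ℝ) < (1/2 : ℝ) ^ r := by positivity
    rw [hρdef]; linarith
  have hρle : ρ ≤ 1 := by
    have : (0:ℝ) < (1/2 : ℝ) ^ r := by positivity
    rw [hρdef]; linarith
  obtain ⟨C₆, hC₆def⟩ : ∃ x : ℝ, x = 2 / ρ := ⟨_, rfl⟩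
  obtain ⟨K₂, hK₂def⟩ : ∃ x : ℝ, x = (r + 1) / ρ := ⟨_, rfl⟩
  have h1r : (1:ℝ) ≤ (r:ℝ) := by exact_mod_cast hr
  have hC₆2 : 2 ≤ C₆ := by
    rw [hC₆def, le_div_iff₀ hρpos]
    linarith
  have hC₆pos : 0 < C₆ := by linarith
  have hK₂2 : 2 ≤ K₂ := by
    rw [hK₂def, le_div_iff₀ hρpos]
    linarith
  have hK₂pos : 0 < K₂ := by linarith
  -- comparison polynomials
  set Tb : Polynomial ℝ := Polynomial.C C₆ * (Q - Qh) - Q with hTbdef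
  have hTb_coeff : Tb.coeff r = c0 := by
    rw [hTbdef]
    rw [Polynomial.coeff_sub, Polynomial.coeff_C_mul, Polynomial.coeff_sub, hQh_coeff]
    have h2 : Q.coeff r = c0 := by rw [hc0def, Polynomial.leadingCoeff, hQdeg]
    rw [h2]
    have h3 : c0 - c0 * (1/2:ℝ) ^ r = c0 * ρ := by rw [hρdef]; ring
    rw [h3, hC₆def]
    field_simp
    ring
  have hTb_deg : Tb.natDegree ≤ r := by
    rw [hTbdef]
    refine (Polynomial.natDegree_sub_le _ _).trans ?_
    apply max_le
    · refine (Polynomial.natDegree_C_mul_le _ _).trans ?_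
      refine (Polynomial.natDegree_sub_le _ _).trans ?_
      apply max_le (le_of_eq hQdeg) (le_of_eq hQh_deg)
    · exact le_of_eq hQdeg
  have hev_b : ∀ᶠ x in atTop, 0 < Tb.eval x :=
    ev_pos' Tb r hTb_deg (by rw [hTb_coeff]; exact hQlc)
  set Tc : Polynomial ℝ := Polynomial.C K₂ * (Q - Qh) - Polynomial.X * Q' with hTcdef
  have hXQ'_coeff : (Polynomial.X * Q').coeff r = c0 * r := by
    have h1 : r = (r - 1) + 1 := (Nat.sub_add_cancel hr).symm
    rw [h1, Polynomial.coeff_X_mul, hQ'coeff, Nat.sub_add_cancel hr]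
  have hTc_coeff : Tc.coeff r = c0 := by
    rw [hTcdef, Polynomial.coeff_sub, Polynomial.coeff_C_mul, Polynomial.coeff_sub,
      hQh_coeff, hXQ'_coeff]
    have h2 : Q.coeff r = c0 := by rw [hc0def, Polynomial.leadingCoeff, hQdeg]
    rw [h2]
    have h3 : c0 - c0 * (1/2:ℝ) ^ r = c0 * ρ := by rw [hρdef]; ring
    rw [h3, hK₂def]
    field_simp
    ring
  have hTc_deg : Tc.natDegree ≤ r := by
    rw [hTcdef]
    refine (Polynomial.natDegree_sub_le _ _).trans ?_
    apply max_le
    · refine (Polynomial.natDegree_C_mul_le _ _).trans ?_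
      refine (Polynomial.natDegree_sub_le _ _).trans ?_
      apply max_le (le_of_eq hQdeg) (le_of_eq hQh_deg)
    · refine (Polynomial.natDegree_mul_le).trans ?_
      rw [Polynomial.natDegree_X]
      have := (Polynomial.natDegree_derivative_le Q).trans (le_of_eq (by rw [hQdeg]))
      rw [← hQ'def] at this
      omega
  have hev_c : ∀ᶠ x in atTop, 0 < Tc.eval x :=
    ev_pos' Tc r hTc_deg (by rw [hTc_coeff]; exact hQlc)
  have hev_Q : ∀ᶠ x in atTop, 0 < Q.eval x := ev_pos Q hQlc
  have hev_Q' : ∀ᶠ x in atTop, 0 < Q'.eval x := ev_pos Q' hQ'lc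
  have hev_Q'' : ∀ᶠ x in atTop, 0 ≤ (Polynomial.derivative Q').eval x :=
    ev_nonneg _ (lc_deriv_nonneg Q' hQ'lc.le)
  have hall := ((hev_b.and hev_c).and ((hev_Q.and hev_Q').and hev_Q''))
  rw [Filter.eventually_atTop] at hall
  obtain ⟨X₀, hX₀⟩ := hall
  obtain ⟨A, hAdef⟩ : ∃ x : ℝ, x = max X₀ 1 := ⟨_, rfl⟩
  have hA1 : 1 ≤ A := hAdef ▸ le_max_right _ _
  have hAX : X₀ ≤ A := hAdef ▸ le_max_left _ _
  have hApos : 0 < A := lt_of_lt_of_le one_pos hA1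
  -- monotonicity of Q and Q' on [A, ∞)
  have hmonoQ : MonotoneOn (fun x => Q.eval x) (Set.Ici A) := by
    apply monotoneOn_of_deriv_nonneg (convex_Ici A) (Q.continuous.continuousOn)
      (Q.differentiable.differentiableOn)
    intro x hx
    rw [interior_Ici] at hx
    rw [Polynomial.deriv]
    exact ((hX₀ x (le_trans hAX hx.le)).2.1).2.le
  have hmonoQ' : MonotoneOn (fun x => Q'.eval x) (Set.Ici A) := by
    apply monotoneOn_of_deriv_nonneg (convex_Ici A) (Q'.continuous.continuousOn)
      (Q'.differentiable.differentiableOn)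
    intro x hx
    rw [interior_Ici] at hx
    rw [Polynomial.deriv]
    exact (hX₀ x (le_trans hAX hx.le)).2.2
  -- final constants
  have hden : 0 < 128 * K₂ * C₆ ^ 2 :=
    mul_pos (mul_pos (by norm_num) hK₂pos) (pow_pos hC₆pos 2)
  refine ⟨1 / (128 * K₂ * C₆ ^ 2), 2 * A, by positivity, by linarith, ?_⟩
  intro L hL a b hb hba y
  obtain ⟨cm, hcmdef⟩ : ∃ x : ℝ, x = 1 / (128 * K₂ * C₆ ^ 2) := ⟨_, rfl⟩
  have hcmpos : 0 < cm := by rw [hcmdef]; positivity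
  have hcm_small : cm ≤ 1 / 1024 := by
    rw [hcmdef]
    apply one_div_le_one_div_of_le (by norm_num)
    have hC₆sq : (4:ℝ) ≤ C₆^2 := by
      rw [pow_two]
      calc (4:ℝ) = 2*2 := by norm_num
      _ ≤ C₆ * C₆ := mul_le_mul hC₆2 hC₆2 (by norm_num) (by linarith)
    have e1 : 128*2*(4:ℝ) ≤ 128*K₂*C₆^2 := by
      have e2 : 128*K₂*4 ≤ 128*K₂*C₆^2 :=
        mul_le_mul_of_nonneg_left hC₆sq (by linarith)
      have e3 : 128*2*(4:ℝ) ≤ 128*K₂*4 := by linarith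
      linarith
    linarith
  -- basic positivity
  have hLA : 2 * A ≤ L := hL
  have hLpos : 0 < L := by linarith
  have hhalfA : A ≤ L / 2 := by linarith
  have hhalfL : L / 2 ≤ L := by linarith
  have hX₀L2 : X₀ ≤ L / 2 := le_trans hAX hhalfA
  have hX₀L : X₀ ≤ L := le_trans hX₀L2 hhalfL
  have haZ : (2 : ℤ) ≤ a := by omega
  have ha2 : (2 : ℝ) ≤ (a : ℝ) := by exact_mod_cast haZ
  have hapos : (0 : ℝ) < (a : ℝ) := by linarith
  set β : ℝ := (b : ℝ) / (a : ℝ) with hβdef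
  -- distance of β from integers
  have hbeta : ∀ k : ℤ, 1 / (a : ℝ) ≤ |β - k| := by
    intro k
    have hne : b - k * a ≠ 0 := by
      intro h
      have hbka : b = k * a := by omega
      have ha0 : (0:ℤ) ≤ a := by omega
      rcases le_or_gt k 0 with hk | hk
      · have h2 : k * a ≤ 0 * a := mul_le_mul_of_nonneg_right hk ha0
        rw [zero_mul] at h2
        linarith
      · have hk1 : (1:ℤ) ≤ k := hk
        have h2 : 1 * a ≤ k * a := mul_le_mul_of_nonneg_right hk1 ha0
        rw [one_mul] at h2
        linarith
    have h1 : (1 : ℤ) ≤ |b - k * a| := Int.one_le_abs hne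
    have h1R : (1 : ℝ) ≤ |(b : ℝ) - (k : ℝ) * (a : ℝ)| := by
      have h2 : ((b - k * a : ℤ) : ℝ) = (b : ℝ) - (k : ℝ) * (a : ℝ) := by push_cast; ring
      calc (1 : ℝ) = ((1 : ℤ) : ℝ) := by norm_num
      _ ≤ |((b - k * a : ℤ) : ℝ)| := by rw [← Int.cast_abs]; exact_mod_cast h1
      _ = |(b : ℝ) - (k : ℝ) * (a : ℝ)| := by rw [h2]
    have hfrac : β - k = ((b : ℝ) - (k : ℝ) * (a : ℝ)) / a := by
      rw [hβdef]; field_simp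
    rw [hfrac, abs_div, abs_of_pos hapos]
    exact (div_le_div_iff_of_pos_right hapos).mpr h1R
  -- facts at L
  have hTbL : 0 < Tb.eval L := (hX₀ L hX₀L).1.1
  have hTcL : 0 < Tc.eval L := (hX₀ L hX₀L).1.2
  have hQLpos : 0 < Q.eval L := ((hX₀ L hX₀L).2.1).1
  have hTbeval : Tb.eval L = C₆ * (Q.eval L - Q.eval (L/2)) - Q.eval L := by
    rw [hTbdef]
    simp [hQh_eval]
  have hTceval : Tc.eval L = K₂ * (Q.eval L - Q.eval (L/2)) - L * Q'.eval L := by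
    rw [hTcdef]
    simp [hQh_eval]
  obtain ⟨Δ, hΔdef⟩ : ∃ x : ℝ, x = Q.eval L - Q.eval (L/2) := ⟨_, rfl⟩
  have hΔnn : 0 ≤ Δ := by
    have := hmonoQ (Set.mem_Ici.mpr hhalfA) (Set.mem_Ici.mpr (le_trans hhalfA hhalfL)) hhalfL
    rw [hΔdef]; simpa using sub_nonneg.mpr this
  have Hb : Q.eval L < C₆ * Δ := by rw [hΔdef]; rw [hTbeval] at hTbL; linarith
  have Hc : L * Q'.eval L < K₂ * Δ := by rw [hΔdef]; rw [hTceval] at hTcL; linarith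
  have hΔpos : 0 < Δ := by
    have h0 : 0 < C₆ * Δ := lt_trans hQLpos Hb
    rcases mul_pos_iff.mp h0 with ⟨_, h⟩ | ⟨h, _⟩
    · exact h
    · linarith
  obtain ⟨V, hVdef⟩ : ∃ x : ℝ, x = |y| * Δ := ⟨_, rfl⟩
  have hVnn : 0 ≤ V := by rw [hVdef]; positivity
  -- rewrite the integrand
  simp only [haev]
  have hgc : Continuous fun u : ℝ => Real.sin (Real.pi * (β - Q.eval u * y)) ^ 2 := by
    have : Continuous fun u : ℝ => Q.eval u := Q.continuous
    fun_prop
  have hint : ∀ a' b' : ℝ, IntervalIntegrable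
      (fun u => Real.sin (Real.pi * (β - Q.eval u * y)) ^ 2) MeasureTheory.volume a' b' :=
    fun a' b' => hgc.intervalIntegrable _ _
  have hnn : ∀ u : ℝ, 0 ≤ Real.sin (Real.pi * (β - Q.eval u * y)) ^ 2 := fun u => sq_nonneg _
  have hIJ : (∫ u in (L/2)..L, Real.sin (Real.pi * (β - Q.eval u * y)) ^ 2)
      ≤ ∫ u in (0:ℝ)..L, Real.sin (Real.pi * (β - Q.eval u * y)) ^ 2 :=
    intervalIntegral.integral_mono_interval (by linarith : (0:ℝ) ≤ L/2) hhalfL le_rfl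
      (MeasureTheory.ae_of_all _ hnn) (hint 0 L)
  rw [← hcmdef]
  refine le_trans ?_ hIJ
  have ha2pos : (0:ℝ) < (a:ℝ)^2 := by positivity
  have hasq : (4:ℝ) ≤ (a:ℝ)^2 := by
    rw [pow_two]
    calc (4:ℝ) = 2*2 := by norm_num
    _ ≤ (a:ℝ) * (a:ℝ) := mul_le_mul ha2 ha2 (by norm_num) (by linarith)
  rcases le_or_gt V (1/(4*C₆*(a:ℝ))) with hcase | hcase
  · -- Case 1 : small total variation
    have hpoint : ∀ u ∈ Set.Icc (L/2) L,
        1/(a:ℝ)^2 ≤ Real.sin (Real.pi * (β - Q.eval u * y)) ^ 2 := by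
      intro u hu
      have hX₀u : X₀ ≤ u := le_trans hX₀L2 hu.1
      have hQu : 0 < Q.eval u := ((hX₀ u hX₀u).2.1).1
      have hAu : A ≤ u := le_trans hhalfA hu.1
      have hAL : A ≤ L := le_trans hhalfA hhalfL
      have hmul : Q.eval u ≤ Q.eval L :=
        hmonoQ (Set.mem_Ici.mpr hAu) (Set.mem_Ici.mpr hAL) hu.2
      have hyb : |Q.eval u * y| ≤ 1/(4*(a:ℝ)) := by
        rw [abs_mul, abs_of_pos hQu]
        calc Q.eval u * |y| ≤ Q.eval L * |y| :=
              mul_le_mul_of_nonneg_right hmul (abs_nonneg y)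
        _ ≤ (C₆ * Δ) * |y| := mul_le_mul_of_nonneg_right Hb.le (abs_nonneg y)
        _ = C₆ * V := by rw [hVdef]; ring
        _ ≤ C₆ * (1/(4*C₆*(a:ℝ))) := mul_le_mul_of_nonneg_left hcase hC₆pos.le
        _ = 1/(4*(a:ℝ)) := by field_simp
      have hk : ∀ k : ℤ, 1/(2*(a:ℝ)) ≤ |(β - Q.eval u * y) - k| := by
        intro k
        have h1 := hbeta k
        have h2 : |β - k| - |Q.eval u * y| ≤ |(β - k) - Q.eval u * y| :=
          abs_sub_abs_le_abs_sub _ _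
        have h3 : (β - k) - Q.eval u * y = (β - Q.eval u * y) - k := by ring
        rw [h3] at h2
        have e1 : 1/(4*(a:ℝ)) = (1/4) * (1/(a:ℝ)) := by ring
        have e2 : 1/(2*(a:ℝ)) = (1/2) * (1/(a:ℝ)) := by ring
        have hpa : 0 < 1/(a:ℝ) := by positivity
        rw [e2]
        rw [e1] at hyb
        linarith
      have h4 := sin_sq_ge (β - Q.eval u * y) (1/(2*(a:ℝ))) (by positivity) hk
      have h5 : 4 * (1/(2*(a:ℝ)))^2 = 1/(a:ℝ)^2 := by
        field_simp
        ring
      rw [h5] at h4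
      exact h4
    have hconst : (∫ _u in (L/2)..L, 1/(a:ℝ)^2) = (L - L/2) * (1/(a:ℝ)^2) := by
      rw [intervalIntegral.integral_const]
      simp [smul_eq_mul]
    have hlow := intervalIntegral.integral_mono_on hhalfL intervalIntegrable_const
      (hint (L/2) L) hpoint
    rw [hconst] at hlow
    have hcm2 : cm ≤ 1/2 := le_trans hcm_small (by norm_num)
    calc cm * L / (a:ℝ)^2 ≤ (L - L/2) * (1/(a:ℝ)^2) := by
          rw [div_le_iff₀ ha2pos]
          have : (L - L/2) * (1/(a:ℝ)^2) * (a:ℝ)^2 = L/2 := by field_simp; ring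
          rw [this]
          have := mul_le_mul_of_nonneg_right hcm2 hLpos.le
          linarith
    _ ≤ _ := hlow
  · -- Case 2 : large total variation
    have hVpos : 0 < V := lt_trans (by positivity) hcase
    have hgder : ∀ u : ℝ, HasDerivAt (fun u : ℝ => β - Q.eval u * y)
        (-(Q'.eval u * y)) u := by
      intro u
      have h1 := (Polynomial.hasDerivAt Q u).mul_const y
      exact h1.const_sub β
    have hMbd : ∀ u ∈ Set.Icc (L/2) L, |Q'.eval u * y| ≤ K₂ * V / L := by
      intro u hu
      have hX₀u : X₀ ≤ u := le_trans hX₀L2 hu.1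
      have hQ'u : 0 < Q'.eval u := ((hX₀ u hX₀u).2.1).2
      have hAu : A ≤ u := le_trans hhalfA hu.1
      have hAL : A ≤ L := le_trans hhalfA hhalfL
      have hmul : Q'.eval u ≤ Q'.eval L :=
        hmonoQ' (Set.mem_Ici.mpr hAu) (Set.mem_Ici.mpr hAL) hu.2
      rw [abs_mul, abs_of_pos hQ'u]
      have h1 : Q'.eval u * |y| ≤ Q'.eval L * |y| :=
        mul_le_mul_of_nonneg_right hmul (abs_nonneg y)
      have h2 : Q'.eval L * |y| ≤ K₂ * Δ / L * |y| := by
        apply mul_le_mul_of_nonneg_right _ (abs_nonneg y)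
        rw [le_div_iff₀ hLpos, mul_comm]
        exact Hc.le
      have h3 : K₂ * Δ / L * |y| = K₂ * V / L := by
        rw [hVdef]; ring
      linarith
    have hCoV := intervalIntegral.integral_comp_smul_deriv
      (a := L/2) (b := L)
      (f := fun u : ℝ => β - Q.eval u * y) (f' := fun u : ℝ => -(Q'.eval u * y))
      (g := fun t : ℝ => Real.sin (Real.pi * t) ^ 2)
      (fun x _ => hgder x)
      (by have : Continuous fun u : ℝ => Q'.eval u := Q'.continuous
          fun_prop)
      (by fun_prop)
    simp only [Function.comp_def, smul_eq_mul] at hCoV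
    set IJ := ∫ u in (L/2)..L, Real.sin (Real.pi * (β - Q.eval u * y)) ^ 2 with hIJdef
    have hIJnn : 0 ≤ IJ := by
      rw [hIJdef]
      apply intervalIntegral.integral_nonneg hhalfL
      intro u _
      exact hnn u
    -- |W| ≤ M * IJ
    have habsW : |∫ t in (β - Q.eval (L/2) * y)..(β - Q.eval L * y), Real.sin (Real.pi * t) ^ 2|
        ≤ (K₂ * V / L) * IJ := by
      rw [← hCoV]
      refine le_trans (intervalIntegral.abs_integral_le_integral_abs hhalfL) ?_
      have hptw : ∀ u ∈ Set.Icc (L/2) L,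
          |(-(Q'.eval u * y)) * Real.sin (Real.pi * (β - Q.eval u * y)) ^ 2|
            ≤ (K₂ * V / L) * Real.sin (Real.pi * (β - Q.eval u * y)) ^ 2 := by
        intro u hu
        rw [abs_mul, abs_neg, abs_of_nonneg (hnn u)]
        exact mul_le_mul_of_nonneg_right (hMbd u hu) (hnn u)
      have hi1 : IntervalIntegrable
          (fun u => |(-(Q'.eval u * y)) * Real.sin (Real.pi * (β - Q.eval u * y)) ^ 2|)
          MeasureTheory.volume (L/2) L := by
        apply Continuous.intervalIntegrable
        have h1 : Continuous fun u : ℝ => Q'.eval u := Q'.continuous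
        have h2 : Continuous fun u : ℝ => Q.eval u := Q.continuous
        fun_prop
      have hi2 : IntervalIntegrable
          (fun u => (K₂ * V / L) * Real.sin (Real.pi * (β - Q.eval u * y)) ^ 2)
          MeasureTheory.volume (L/2) L := by
        apply Continuous.intervalIntegrable
        have h2 : Continuous fun u : ℝ => Q.eval u := Q.continuous
        fun_prop
      refine le_trans (intervalIntegral.integral_mono_on hhalfL hi1 hi2 hptw) ?_
      rw [intervalIntegral.integral_const_mul]
    -- lower bound for |W|
    have hdiff : (β - Q.eval (L/2) * y) - (β - Q.eval L * y) = Δ * y := by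
      rw [hΔdef]; ring
    have hVabs : V = |Δ * y| := by
      rw [hVdef, abs_mul, abs_of_nonneg hΔnn]; ring
    have hWlow : min (V/4) (V^3/8)
        ≤ |∫ t in (β - Q.eval (L/2) * y)..(β - Q.eval L * y), Real.sin (Real.pi * t) ^ 2| := by
      rcases le_total (β - Q.eval (L/2) * y) (β - Q.eval L * y) with hor | hor
      · have hTV : (β - Q.eval L * y) - (β - Q.eval (L/2) * y) = V := by
          rw [hVabs]
          rw [abs_of_nonpos (by linarith [hdiff] : Δ * y ≤ 0)]
          linarith [hdiff]
        have hWnn : 0 ≤ ∫ t in (β - Q.eval (L/2) * y)..(β - Q.eval L * y),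
            Real.sin (Real.pi * t) ^ 2 :=
          intervalIntegral.integral_nonneg hor (fun t _ => sq_nonneg _)
        rw [abs_of_nonneg hWnn]
        rcases le_or_gt 1 V with hV1 | hV1
        · refine le_trans (min_le_left _ _) ?_
          have := S_lb1 (T₁ := β - Q.eval (L/2) * y) (T₂ := β - Q.eval L * y)
            (by rw [hTV]; exact hV1)
          rwa [hTV] at this
        · refine le_trans (min_le_right _ _) ?_
          have := S_lb2 (T₁ := β - Q.eval (L/2) * y) (T₂ := β - Q.eval L * y)
            (by rw [hTV]; exact hVnn) (by rw [hTV]; exact hV1.le)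
          rwa [hTV] at this
      · have hTV : (β - Q.eval (L/2) * y) - (β - Q.eval L * y) = V := by
          rw [hVabs]
          rw [abs_of_nonneg (by linarith [hdiff] : 0 ≤ Δ * y)]
          linarith [hdiff]
        have hsym : (∫ t in (β - Q.eval (L/2) * y)..(β - Q.eval L * y),
            Real.sin (Real.pi * t) ^ 2)
            = -∫ t in (β - Q.eval L * y)..(β - Q.eval (L/2) * y),
                Real.sin (Real.pi * t) ^ 2 :=
          intervalIntegral.integral_symm _ _
        have hWnn : 0 ≤ ∫ t in (β - Q.eval L * y)..(β - Q.eval (L/2) * y),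
            Real.sin (Real.pi * t) ^ 2 :=
          intervalIntegral.integral_nonneg hor (fun t _ => sq_nonneg _)
        rw [hsym, abs_neg, abs_of_nonneg hWnn]
        rcases le_or_gt 1 V with hV1 | hV1
        · refine le_trans (min_le_left _ _) ?_
          have := S_lb1 (T₁ := β - Q.eval L * y) (T₂ := β - Q.eval (L/2) * y)
            (by rw [hTV]; exact hV1)
          rwa [hTV] at this
        · refine le_trans (min_le_right _ _) ?_
          have := S_lb2 (T₁ := β - Q.eval L * y) (T₂ := β - Q.eval (L/2) * y)
            (by rw [hTV]; exact hVnn) (by rw [hTV]; exact hV1.le)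
          rwa [hTV] at this
    have hkey : min (V/4) (V^3/8) ≤ (K₂ * V / L) * IJ := le_trans hWlow habsW
    rcases le_or_gt 1 V with hV1 | hV1
    · -- V ≥ 1
      have h7 : V/8 ≤ K₂ * V / L * IJ := by
        refine le_trans (le_min (by linarith) ?_) hkey
        have hVcube : V ≤ V^3 := by
          have e : V^3 - V = V*((V-1)*(V+1)) := by ring
          have e2 : 0 ≤ V*((V-1)*(V+1)) :=
            mul_nonneg hVnn (mul_nonneg (by linarith) (by linarith))
          linarith
        linarith
      have h8 : V/8 * L ≤ K₂ * V * IJ := by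
        have h := mul_le_mul_of_nonneg_right h7 hLpos.le
        have he : K₂ * V / L * IJ * L = K₂ * V * IJ := by field_simp
        rw [he] at h
        exact h
      have h9 : L/(8*K₂) ≤ IJ := by
        rw [div_le_iff₀ (by positivity)]
        have h82 : V * L ≤ V * (IJ * (8*K₂)) := by linarith [h8]
        exact (mul_le_mul_iff_right₀ hVpos).mp h82
      calc cm * L / (a:ℝ)^2 ≤ L/(8*K₂) := by
            rw [div_le_div_iff₀ ha2pos (by positivity)]
            have hcmK : cm * (8*K₂) ≤ 1 := by
              rw [hcmdef, div_mul_eq_mul_div, div_le_one (by positivity)]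
              have hC₆sq : (4:ℝ) ≤ C₆^2 := by
                rw [pow_two]
                calc (4:ℝ) = 2*2 := by norm_num
                _ ≤ C₆ * C₆ := mul_le_mul hC₆2 hC₆2 (by norm_num) (by linarith)
              have e2 : 128*K₂*4 ≤ 128*K₂*C₆^2 :=
                mul_le_mul_of_nonneg_left hC₆sq (by linarith)
              linarith
            have e1 : cm*L*(8*K₂) = L*(cm*(8*K₂)) := by ring
            have e2 : L*(cm*(8*K₂)) ≤ L*1 := mul_le_mul_of_nonneg_left hcmK hLpos.le
            have e3 : L*1 ≤ L*(a:ℝ)^2 := mul_le_mul_of_nonneg_left (by linarith) hLpos.le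
            linarith
      _ ≤ IJ := h9
    · -- V < 1
      have h7 : V^3/8 ≤ K₂ * V / L * IJ := by
        refine le_trans (le_min ?_ le_rfl) hkey
        have hVcube : V^3 ≤ V := by
          have e : V - V^3 = V*((1-V)*(1+V)) := by ring
          have e2 : 0 ≤ V*((1-V)*(1+V)) :=
            mul_nonneg hVnn (mul_nonneg (by linarith) (by linarith))
          linarith
        linarith
      have h8 : V^3/8 * L ≤ K₂ * V * IJ := by
        have h := mul_le_mul_of_nonneg_right h7 hLpos.le
        have he : K₂ * V / L * IJ * L = K₂ * V * IJ := by field_simp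
        rw [he] at h
        exact h
      have h9 : V^2 * L/(8*K₂) ≤ IJ := by
        rw [div_le_iff₀ (by positivity)]
        have h82 : V * (V^2 * L) ≤ V * (IJ * (8*K₂)) := by linarith [h8]
        exact (mul_le_mul_iff_right₀ hVpos).mp h82
      have hV2 : 1/(16*C₆^2*(a:ℝ)^2) ≤ V^2 := by
        have h1 : (1/(4*C₆*(a:ℝ)))^2 ≤ V^2 := by
          rw [pow_two, pow_two]
          exact mul_self_le_mul_self (by positivity) hcase.le
        have h2 : (1/(4*C₆*(a:ℝ)))^2 = 1/(16*C₆^2*(a:ℝ)^2) := by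
          field_simp
          ring
        rw [← h2]
        exact h1
      calc cm * L / (a:ℝ)^2 = (1/(16*C₆^2*(a:ℝ)^2)) * L/(8*K₂) := by
            rw [hcmdef]
            field_simp
            ring
      _ ≤ V^2 * L/(8*K₂) :=
            (div_le_div_iff_of_pos_right (by positivity)).mpr
              (mul_le_mul_of_nonneg_right hV2 hLpos.le)
      _ ≤ IJ := h9
end

section
/- For every integer r ≥ 1 and every real x > 0, one has −∫₀^∞ log(1 − e^{−u^r x}) du = ζ(1 + 1/r) · Γ(1 + 1/r) · x^{−1/r}, where ζ is the Riemann zeta function and Γ is the Gamma function. -/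
open MeasureTheory Set Real

lemma aux_log_series (b : ℝ) (hb : 0 < b) :
    HasSum (fun n : ℕ ↦ Real.exp (-(((n : ℝ) + 1) * b)) / ((n : ℝ) + 1))
      (-Real.log (1 - Real.exp (-b))) := by
  have h : |Real.exp (-b)| < 1 := by
    rw [abs_of_pos (Real.exp_pos _)]
    exact Real.exp_lt_one_iff.mpr (by linarith)
  convert hasSum_pow_div_log_of_abs_lt_one h using 2 with n
  rw [← Real.exp_nat_mul]
  push_cast
  ring_nf

lemma aux_integral (r : ℕ) (hr : 1 ≤ r) (b : ℝ) (hb : 0 < b) :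
    ∫ u in Ioi (0 : ℝ), Real.exp (-b * u ^ r) =
      b ^ (-(1 / (r : ℝ))) * Real.Gamma (1 / (r : ℝ) + 1) := by
  have hr0 : (0 : ℝ) < (r : ℝ) := by exact_mod_cast hr
  have := integral_exp_neg_mul_rpow hr0 hb
  simp_rw [Real.rpow_natCast] at this
  rw [this, neg_div]

lemma aux_integrable (r : ℕ) (hr : 1 ≤ r) (b : ℝ) (hb : 0 < b) :
    IntegrableOn (fun u : ℝ ↦ Real.exp (-b * u ^ r)) (Ioi 0) := by
  have hr1 : (1 : ℝ) ≤ (r : ℝ) := by exact_mod_cast hr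
  have := integrableOn_rpow_mul_exp_neg_mul_rpow (p := (r : ℝ)) (s := 0)
    (by norm_num) (by linarith) hb
  simp_rw [Real.rpow_zero, one_mul, Real.rpow_natCast] at this
  exact this

theorem stmt12 (r : ℕ) (hr : 1 ≤ r) (x : ℝ) (hx : 0 < x) :
    (-(∫ u in Set.Ioi (0 : ℝ), Real.log (1 - Real.exp (-(u ^ r) * x))) : ℂ) =
      riemannZeta (1 + 1 / (r : ℂ)) * Complex.Gamma (1 + 1 / (r : ℂ)) *
        (x : ℂ) ^ (-(1 / (r : ℂ))) := by
  have hr0 : (0 : ℝ) < (r : ℝ) := by exact_mod_cast hr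
  have hrc : (r : ℂ) ≠ 0 := by exact_mod_cast (by positivity : (r : ℝ) ≠ 0)
  set s : ℝ := 1 / (r : ℝ) with hs
  have hs0 : 0 < s := by positivity
  -- the summands and their integrals
  set F : ℕ → ℝ → ℝ := fun n u ↦ Real.exp (-(((n : ℝ) + 1) * x) * u ^ r) / ((n : ℝ) + 1)
    with hF
  have hb : ∀ n : ℕ, 0 < ((n : ℝ) + 1) * x := fun n ↦ by positivity
  have hFint : ∀ n : ℕ, IntegrableOn (F n) (Ioi 0) := fun n ↦
    ((aux_integrable r hr _ (hb n)).div_const _)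
  have hFval : ∀ n : ℕ, ∫ u in Ioi (0 : ℝ), F n u =
      x ^ (-s) * Real.Gamma (s + 1) * ((n : ℝ) + 1) ^ (-(s + 1)) := by
    intro n
    rw [hF]
    simp only
    rw [integral_div, aux_integral r hr _ (hb n),
      Real.mul_rpow (by positivity) hx.le]
    rw [← hs, show -(s+1) = -s + (-1) by ring, Real.rpow_add (by positivity),
      Real.rpow_neg_one]
    ring
  have hFnorm : ∀ n : ℕ, ∫ u in Ioi (0 : ℝ), ‖F n u‖ =
      x ^ (-s) * Real.Gamma (s + 1) * ((n : ℝ) + 1) ^ (-(s + 1)) := by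
    intro n
    rw [← hFval n]
    refine integral_congr_ae (Filter.Eventually.of_forall fun u ↦ ?_)
    simp only [hF, Real.norm_eq_abs]
    exact abs_of_nonneg (by positivity)
  -- summability
  have hsummable : Summable (fun n : ℕ ↦ ((n : ℝ) + 1) ^ (-(s + 1))) := by
    have h1 : Summable (fun n : ℕ ↦ ((n : ℝ)) ^ (-(s + 1))) := by
      rw [Real.summable_nat_rpow]
      linarith
    have := (summable_nat_add_iff 1).mpr h1
    refine this.congr fun n ↦ ?_
    push_cast
    ring_nf
  have hsum := hasSum_integral_of_summable_integral_norm (μ := volume.restrict (Ioi 0))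
    hFint (by simpa only [hFnorm] using hsummable.mul_left (x ^ (-s) * Real.Gamma (s + 1)))
  -- identify the pointwise sum with the log
  have hptwise : ∫ u in Ioi (0 : ℝ), ∑' n : ℕ, F n u =
      ∫ u in Ioi (0 : ℝ), -Real.log (1 - Real.exp (-(u ^ r) * x)) := by
    refine setIntegral_congr_fun measurableSet_Ioi fun u hu ↦ ?_
    have hb' : 0 < u ^ r * x := by
      have : (0:ℝ) < u := hu
      positivity
    have := (aux_log_series (u ^ r * x) hb').tsum_eq
    simp only [hF]
    rw [show -(u ^ r) * x = -(u ^ r * x) by ring, ← this]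
    refine tsum_congr fun n ↦ ?_
    congr 2
    ring
  set T : ℝ := ∑' n : ℕ, ((n : ℝ) + 1) ^ (-(s + 1)) with hT
  have hInt : -(∫ u in Ioi (0 : ℝ), Real.log (1 - Real.exp (-(u ^ r) * x))) =
      x ^ (-s) * Real.Gamma (s + 1) * T := by
    rw [← integral_neg, ← hptwise, ← hsum.tsum_eq]
    simp_rw [hFval]
    rw [tsum_mul_left]
  rw [← Complex.ofReal_neg, hInt]
  -- now identify the complex RHS
  have hcast : (1 : ℂ) + 1 / (r : ℂ) = ((1 + s : ℝ) : ℂ) := by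
    rw [hs]; push_cast; ring
  have hzeta : riemannZeta (1 + 1 / (r : ℂ)) = (T : ℂ) := by
    rw [zeta_eq_tsum_one_div_nat_add_one_cpow (by
      rw [hcast, Complex.ofReal_re]; linarith), hT, Complex.ofReal_tsum]
    refine tsum_congr fun n ↦ ?_
    rw [Complex.ofReal_cpow (by positivity), hcast]
    push_cast
    rw [show (-((s : ℂ) + 1)) = -(1 + (s : ℂ)) by ring, Complex.cpow_neg, one_div]
  have hGamma : Complex.Gamma (1 + 1 / (r : ℂ)) = ((Real.Gamma (s + 1) : ℝ) : ℂ) := by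
    rw [hcast, Complex.Gamma_ofReal]
    norm_num [add_comm]
  have hxpow : (x : ℂ) ^ (-(1 / (r : ℂ))) = ((x ^ (-s) : ℝ) : ℂ) := by
    rw [Complex.ofReal_cpow hx.le]
    congr 1
    rw [hs]; push_cast; ring
  rw [hzeta, hGamma, hxpow]
  push_cast
  ring
end

section
/- Let a_r > 0 denote the leading coefficient of P. There exist constants C > 0 and x₀ > 0 such that for all x ∈ (0, x₀), | log G_f(x) − ζ(1 + 1/r)·Γ(1 + 1/r)·(a_r x)^{−1/r} | ≤ C · x^{−1/(2r)}, where log G_f(x) := −Σ_{n ≥ 1} log(1 − e^{−f(n)x}). -/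
set_option maxHeartbeats 1000000

open Real MeasureTheory Set Filter


lemma aux_sum_le_integral {h : ℝ → ℝ} (h_anti : AntitoneOn h (Ici 0))
    (h_nonneg : ∀ u, 0 ≤ h u) (h_int : IntegrableOn h (Ioi 0)) :
    Summable (fun n : ℕ => h (n+1)) ∧
      (∑' n : ℕ, h (n+1)) ≤ (∫ u in Ioi 0, h u) ∧
      (∫ u in Ioi 0, h u) ≤ h 0 + ∑' n : ℕ, h (n+1) := by
  have hIoc : ∀ n : ℕ, (∫ u in (0:ℝ)..(n:ℝ), h u) ≤ ∫ u in Ioi 0, h u := by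
    intro n
    rw [intervalIntegral.integral_of_le (by positivity)]
    apply setIntegral_mono_set h_int
    · exact Eventually.of_forall fun u => h_nonneg u
    · exact HasSubset.Subset.eventuallyLE Ioc_subset_Ioi_self
  have key1 : ∀ n : ℕ, ∑ i ∈ Finset.range n, h (i+1) ≤ ∫ u in Ioi 0, h u := by
    intro n
    refine le_trans ?_ (hIoc n)
    have h2 := AntitoneOn.sum_le_integral (x₀ := 0) (a := n)
      (h_anti.mono (Icc_subset_Ici_self.trans (by norm_num)))
    simp only [zero_add] at h2
    refine le_trans (le_of_eq ?_) h2
    apply Finset.sum_congr rfl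
    intro i _
    push_cast
    ring_nf
  have hsummable : Summable (fun n : ℕ => h (n+1)) :=
    summable_of_sum_range_le (fun n => h_nonneg _) key1
  refine ⟨hsummable, Real.tsum_le_of_sum_range_le (fun n => h_nonneg _) key1, ?_⟩
  have key2 : ∀ n : ℕ, (∫ u in (0:ℝ)..(n:ℝ), h u) ≤ h 0 + ∑' n : ℕ, h (n+1) := by
    intro n
    cases n with
    | zero =>
      simp only [Nat.cast_zero, intervalIntegral.integral_same]
      exact add_nonneg (h_nonneg 0) (tsum_nonneg fun n => h_nonneg _)
    | succ m =>
      have h2 := AntitoneOn.integral_le_sum (x₀ := 0) (a := m+1)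
        (h_anti.mono (Icc_subset_Ici_self.trans (by norm_num)))
      simp only [zero_add] at h2
      push_cast at h2 ⊢
      refine h2.trans ?_
      rw [Finset.sum_range_succ']
      simp only [Nat.cast_zero, Nat.cast_add, Nat.cast_one]
      rw [add_comm]
      gcongr
      refine le_trans (le_of_eq ?_) (Summable.sum_le_tsum (Finset.range m) (fun i _ => h_nonneg _) hsummable)
      apply Finset.sum_congr rfl
      intro i _; push_cast; ring_nf
  have htend := intervalIntegral_tendsto_integral_Ioi 0 h_int tendsto_natCast_atTop_atTop
  exact le_of_tendsto' htend key2

lemma aux_exp_sum {p b : ℝ} (hp : 1 ≤ p) (hb : 0 < b) :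
    Summable (fun n : ℕ => exp (-b * ((n:ℝ)+1) ^ p)) ∧
      (∑' n : ℕ, exp (-b * ((n:ℝ)+1) ^ p)) ≤ b ^ (-1/p) * Gamma (1/p+1) ∧
      b ^ (-1/p) * Gamma (1/p+1) ≤ 1 + ∑' n : ℕ, exp (-b * ((n:ℝ)+1) ^ p) := by
  have hp0 : (0:ℝ) < p := lt_of_lt_of_le one_pos hp
  set h : ℝ → ℝ := fun u => exp (-b * u ^ p) with hh
  have h_anti : AntitoneOn h (Ici 0) := by
    intro u hu v hv huv
    simp only [hh]
    apply exp_le_exp.mpr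
    have : u ^ p ≤ v ^ p := rpow_le_rpow hu huv hp0.le
    nlinarith
  have h_nonneg : ∀ u, 0 ≤ h u := fun u => (exp_pos _).le
  have h_int : IntegrableOn h (Ioi 0) := by
    have := integrableOn_rpow_mul_exp_neg_mul_rpow (neg_lt_zero.mpr one_pos) hp0 hb
    refine this.congr_fun (fun x hx => ?_) measurableSet_Ioi
    simp [hh, rpow_zero]
  obtain ⟨hs, h1, h2⟩ := aux_sum_le_integral h_anti h_nonneg h_int
  have hval : (∫ u in Ioi 0, h u) = b ^ (-1/p) * Gamma (1/p+1) :=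
    integral_exp_neg_mul_rpow hp0 hb
  have h00 : h 0 = 1 := by simp [hh, Real.zero_rpow (ne_of_gt hp0)]
  have hfun : ∀ n : ℕ, h ((n:ℝ)+1) = exp (-b * ((n:ℝ)+1) ^ p) := fun n => rfl
  refine ⟨hs, ?_, ?_⟩
  · rw [← hval]; exact h1
  · rw [← hval]; rw [h00] at h2; exact h2

lemma aux_exp_diff (s t : ℝ) : |exp (-s) - exp (-t)| ≤ |s - t| * exp (-min s t) := by
  wlog hst : s ≤ t generalizing s t
  · rw [abs_sub_comm, abs_sub_comm s t, min_comm]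
    exact this t s (le_of_not_ge hst)
  rw [min_eq_left hst, abs_of_nonneg (sub_nonneg.mpr (exp_le_exp.mpr (by linarith))), abs_of_nonpos (by linarith)]
  have h1 : exp (-t) = exp (-s) * exp (-(t - s)) := by rw [← exp_add]; ring_nf
  rw [h1]
  have h2 : 1 - (t - s) ≤ exp (-(t-s)) := by linarith [add_one_le_exp (-(t-s))]
  nlinarith [exp_pos (-s), exp_pos (-(t-s))]

lemma aux_rpow_exp_le {p v : ℝ} (hp : 1 ≤ p) (hv : 0 ≤ v) :
    v ^ (p-1) * exp (-v ^ p) ≤ 1 := by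
  rcases le_or_gt v 1 with h1 | h1
  · have : v ^ (p-1) ≤ 1 := Real.rpow_le_one hv h1 (by linarith)
    nlinarith [exp_pos (-v ^ p), Real.exp_le_one_iff.mpr
      (neg_nonpos.mpr (Real.rpow_nonneg hv p)), Real.rpow_nonneg hv (p-1)]
  · have h2 : v ^ (p-1) ≤ v ^ p := Real.rpow_le_rpow_of_exponent_le h1.le (by linarith)
    have h3 : v ^ p * exp (-v ^ p) ≤ 1 := by
      set x := v ^ p
      have hx : 0 ≤ x := Real.rpow_nonneg (by linarith) p
      have := add_one_le_exp x
      have hex := exp_pos x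
      rw [exp_neg]
      rw [mul_inv_le_iff₀ hex, one_mul]
      linarith
    calc v ^ (p-1) * exp (-v ^ p) ≤ v ^ p * exp (-v ^ p) := by gcongr
      _ ≤ 1 := h3

lemma aux_rpow_exp_scaled {p l u : ℝ} (hp : 1 ≤ p) (hl : 0 < l) (hu : 0 ≤ u) :
    u ^ (p-1) * exp (-(l * u ^ p)) ≤ l ^ (-(p-1)/p) := by
  have hp0 : (0:ℝ) < p := lt_of_lt_of_le one_pos hp
  set v := l ^ (1/p) * u with hv
  have hv0 : 0 ≤ v := mul_nonneg (rpow_nonneg hl.le _) hu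
  have hvp : v ^ p = l * u ^ p := by
    rw [hv, mul_rpow (rpow_nonneg hl.le _) hu, ← Real.rpow_mul hl.le,
      one_div_mul_cancel (ne_of_gt hp0), rpow_one]
  have hvp1 : v ^ (p-1) = l ^ ((p-1)/p) * u ^ (p-1) := by
    rw [hv, mul_rpow (rpow_nonneg hl.le _) hu, ← Real.rpow_mul hl.le]
    congr 2
    field_simp
  have key := aux_rpow_exp_le hp hv0
  rw [hvp, hvp1] at key
  have hlp : (0:ℝ) < l ^ ((p-1)/p) := rpow_pos_of_pos hl _
  rw [neg_div, Real.rpow_neg hl.le]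
  nlinarith [mul_inv_cancel₀ (ne_of_gt hlp), key, hlp,
    mul_nonneg (rpow_nonneg hu (p-1)) (exp_pos (-(l * u ^ p))).le]

lemma main_est {p a B c : ℝ} (hp : 1 ≤ p) (ha : 0 < a) (hc : 0 < c) (hca : c ≤ a) (hB : 0 ≤ B)
    {F : ℕ → ℝ}
    (hFlow : ∀ n : ℕ, c * ((n:ℝ)+1) ^ p ≤ F n)
    (hFclose : ∀ n : ℕ, |F n - a * ((n:ℝ)+1) ^ p| ≤ B * ((n:ℝ)+1) ^ (p-1)) :
    (∀ t : ℝ, 0 < t → Summable (fun n : ℕ => exp (-(F n * t)))) ∧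
    ∃ C₀ : ℝ, 0 < C₀ ∧ ∀ t : ℝ, 0 < t →
      |(∑' n : ℕ, exp (-(F n * t))) - Gamma (1/p+1) * (a*t) ^ (-1/p)| ≤ C₀ * t ^ (-(1/(2*p))) := by
  have hp0 : (0:ℝ) < p := lt_of_lt_of_le one_pos hp
  have hGpos : 0 < Gamma (1/p+1) := Gamma_pos_of_pos (by positivity)
  -- summability of the dominating series and domination
  have hdom : ∀ t : ℝ, 0 < t → ∀ n : ℕ,
      exp (-(F n * t)) ≤ exp (-(c*t/2 * ((n:ℝ)+1) ^ p)) := by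
    intro t ht n
    apply exp_le_exp.mpr
    have h1 := hFlow n
    have h2 : (0:ℝ) ≤ ((n:ℝ)+1) ^ p := rpow_nonneg (by positivity) p
    nlinarith [mul_le_mul_of_nonneg_right h1 ht.le, mul_nonneg (mul_nonneg hc.le ht.le) h2]
  have hsumm : ∀ t : ℝ, 0 < t → Summable (fun n : ℕ => exp (-(F n * t))) := by
    intro t ht
    exact Summable.of_nonneg_of_le (fun n => (exp_pos _).le) (hdom t ht)
      (by simpa [neg_mul] using (aux_exp_sum hp (by positivity : (0:ℝ) < c*t/2)).1)
  refine ⟨hsumm, ?_⟩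
  set C₁ : ℝ := 2*B*Gamma (1/p+1)/c + 1 with hC₁
  set C₂ : ℝ := Gamma (1/p+1) * ((c/2) ^ (-1/p) + a ^ (-1/p)) with hC₂
  have hC₁pos : 0 < C₁ := by positivity
  have hC₂pos : 0 < C₂ := by positivity
  refine ⟨C₁ + C₂, by positivity, ?_⟩
  intro t ht
  -- global constant bound
  have key : |(∑' n : ℕ, exp (-(F n * t))) - Gamma (1/p+1) * (a*t) ^ (-1/p)| ≤ C₁ := by
    have hat : (0:ℝ) < a*t := by positivity
    obtain ⟨hhs, hh1, hh2⟩ := aux_exp_sum hp hat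
    obtain ⟨hes, he1, _⟩ := aux_exp_sum hp (by positivity : (0:ℝ) < c*t/2)
    -- termwise difference bound
    have hterm : ∀ n : ℕ, |exp (-(F n * t)) - exp (-(a*t * ((n:ℝ)+1) ^ p))|
        ≤ t * B * (c*t/2) ^ (-(p-1)/p) * exp (-(c*t/2 * ((n:ℝ)+1) ^ p)) := by
      intro n
      have hnp : (0:ℝ) ≤ ((n:ℝ)+1) ^ p := rpow_nonneg (by positivity) p
      have hmin : c*t * ((n:ℝ)+1) ^ p ≤ min (F n * t) (a*t * ((n:ℝ)+1) ^ p) := by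
        apply le_min
        · have := hFlow n; nlinarith [mul_le_mul_of_nonneg_right this ht.le]
        · nlinarith [mul_le_mul_of_nonneg_right (mul_le_mul_of_nonneg_right hca ht.le) hnp]
      calc |exp (-(F n * t)) - exp (-(a*t * ((n:ℝ)+1) ^ p))|
          ≤ |F n * t - a*t * ((n:ℝ)+1) ^ p| * exp (-min (F n * t) (a*t * ((n:ℝ)+1) ^ p)) :=
            aux_exp_diff _ _
        _ ≤ (t * (B * ((n:ℝ)+1) ^ (p-1))) * exp (-(c*t * ((n:ℝ)+1) ^ p)) := by
            apply mul_le_mul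
            · have heq : F n * t - a*t * ((n:ℝ)+1) ^ p = (F n - a * ((n:ℝ)+1) ^ p) * t := by ring
              rw [heq, abs_mul, abs_of_pos ht, mul_comm]
              exact mul_le_mul_of_nonneg_left (hFclose n) ht.le
            · exact exp_le_exp.mpr (neg_le_neg hmin)
            · exact (exp_pos _).le
            · positivity
        _ ≤ t * B * (c*t/2) ^ (-(p-1)/p) * exp (-(c*t/2 * ((n:ℝ)+1) ^ p)) := by
            have hs : exp (-(c*t * ((n:ℝ)+1) ^ p))
                = exp (-(c*t/2 * ((n:ℝ)+1) ^ p)) * exp (-(c*t/2 * ((n:ℝ)+1) ^ p)) := by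
              rw [← exp_add]; ring_nf
            rw [hs]
            have hscaled := aux_rpow_exp_scaled hp (by positivity : (0:ℝ) < c*t/2)
              (by positivity : (0:ℝ) ≤ (n:ℝ)+1)
            calc t * (B * ((n:ℝ)+1) ^ (p-1)) *
                  (exp (-(c*t/2 * ((n:ℝ)+1) ^ p)) * exp (-(c*t/2 * ((n:ℝ)+1) ^ p)))
                = (t * B) * (((n:ℝ)+1) ^ (p-1) * exp (-(c*t/2 * ((n:ℝ)+1) ^ p)))
                    * exp (-(c*t/2 * ((n:ℝ)+1) ^ p)) := by ring
              _ ≤ (t * B) * ((c*t/2) ^ (-(p-1)/p)) * exp (-(c*t/2 * ((n:ℝ)+1) ^ p)) := by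
                  apply mul_le_mul_of_nonneg_right _ (exp_pos _).le
                  apply mul_le_mul_of_nonneg_left hscaled (by positivity)
              _ = t * B * (c*t/2) ^ (-(p-1)/p) * exp (-(c*t/2 * ((n:ℝ)+1) ^ p)) := by ring
    -- sum the differences
    have hhs' : Summable (fun n : ℕ => exp (-(a*t * ((n:ℝ)+1) ^ p))) := by
      simpa [neg_mul] using hhs
    have hes' : Summable (fun n : ℕ => exp (-(c*t/2 * ((n:ℝ)+1) ^ p))) := by
      simpa [neg_mul] using hes
    have hdiff : |(∑' n : ℕ, exp (-(F n * t))) - ∑' n : ℕ, exp (-(a*t * ((n:ℝ)+1) ^ p))|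
        ≤ 2*B*Gamma (1/p+1)/c := by
      rw [← Summable.tsum_sub (hsumm t ht) hhs']
      have habs : Summable (fun n : ℕ => |exp (-(F n * t)) - exp (-(a*t * ((n:ℝ)+1) ^ p))|) :=
        Summable.of_nonneg_of_le (fun n => abs_nonneg _) hterm (hes'.mul_left _)
      have h1 : |∑' n : ℕ, (exp (-(F n * t)) - exp (-(a*t * ((n:ℝ)+1) ^ p)))|
          ≤ ∑' n : ℕ, t * B * (c*t/2) ^ (-(p-1)/p) * exp (-(c*t/2 * ((n:ℝ)+1) ^ p)) := by
        calc |∑' n : ℕ, (exp (-(F n * t)) - exp (-(a*t * ((n:ℝ)+1) ^ p)))|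
            ≤ ∑' n : ℕ, |exp (-(F n * t)) - exp (-(a*t * ((n:ℝ)+1) ^ p))| := by
              have hn := norm_tsum_le_tsum_norm
                (f := fun n : ℕ => exp (-(F n * t)) - exp (-(a*t * ((n:ℝ)+1) ^ p)))
                (by simpa [Real.norm_eq_abs] using habs)
              simpa [Real.norm_eq_abs] using hn
          _ ≤ _ := Summable.tsum_le_tsum hterm habs (hes'.mul_left _)
      refine h1.trans ?_
      rw [tsum_mul_left]
      have h2 : (∑' n : ℕ, exp (-(c*t/2 * ((n:ℝ)+1) ^ p))) ≤ (c*t/2) ^ (-1/p) * Gamma (1/p+1) := by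
        refine le_trans (le_of_eq (tsum_congr fun n => by rw [neg_mul])) he1
      calc t * B * (c*t/2) ^ (-(p-1)/p) * ∑' n : ℕ, exp (-(c*t/2 * ((n:ℝ)+1) ^ p))
          ≤ t * B * (c*t/2) ^ (-(p-1)/p) * ((c*t/2) ^ (-1/p) * Gamma (1/p+1)) := by
            apply mul_le_mul_of_nonneg_left h2 (by positivity)
        _ = t * B * Gamma (1/p+1) * ((c*t/2) ^ (-(p-1)/p) * (c*t/2) ^ (-1/p)) := by ring
        _ = t * B * Gamma (1/p+1) * ((c*t/2) ^ (-(p-1)/p + -1/p)) := by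
            rw [Real.rpow_add (by positivity)]
        _ = t * B * Gamma (1/p+1) * (c*t/2)⁻¹ := by
            rw [show -(p-1)/p + -1/p = (-1 : ℝ) by field_simp; ring, Real.rpow_neg_one]
        _ = 2*B*Gamma (1/p+1)/c := by field_simp
    have hmain : |(∑' n : ℕ, exp (-(a*t * ((n:ℝ)+1) ^ p))) - Gamma (1/p+1) * (a*t) ^ (-1/p)| ≤ 1 := by
      rw [abs_le]
      have e1 : (∑' n : ℕ, exp (-(a*t * ((n:ℝ)+1) ^ p))) = ∑' n : ℕ, exp (-(a*t) * ((n:ℝ)+1) ^ p) := by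
        congr 1; ext n; rw [neg_mul]
      rw [e1]
      constructor <;> [linarith [hh2, mul_comm ((a*t) ^ (-1/p)) (Gamma (1/p+1))];
        linarith [hh1, mul_comm ((a*t) ^ (-1/p)) (Gamma (1/p+1))]]
    calc |(∑' n : ℕ, exp (-(F n * t))) - Gamma (1/p+1) * (a*t) ^ (-1/p)|
        ≤ |(∑' n : ℕ, exp (-(F n * t))) - ∑' n : ℕ, exp (-(a*t * ((n:ℝ)+1) ^ p))|
          + |(∑' n : ℕ, exp (-(a*t * ((n:ℝ)+1) ^ p))) - Gamma (1/p+1) * (a*t) ^ (-1/p)| := by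
          apply abs_sub_le
      _ ≤ 2*B*Gamma (1/p+1)/c + 1 := add_le_add hdiff hmain
  rcases le_or_gt t 1 with ht1 | ht1
  · -- small t
    have h1 : (1:ℝ) ≤ t ^ (-(1/(2*p))) :=
      Real.one_le_rpow_of_pos_of_le_one_of_nonpos ht ht1 (neg_nonpos.mpr (by positivity))
    calc |(∑' n : ℕ, exp (-(F n * t))) - Gamma (1/p+1) * (a*t) ^ (-1/p)| ≤ C₁ := key
      _ = C₁ * 1 := by ring
      _ ≤ (C₁ + C₂) * t ^ (-(1/(2*p))) := by
          apply mul_le_mul (by linarith) h1 one_pos.le (by positivity)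
  · -- large t
    have htp : t ^ (-1/p) ≤ t ^ (-(1/(2*p))) := by
      apply Real.rpow_le_rpow_of_exponent_le ht1.le
      rw [neg_div, neg_le_neg_iff]
      rw [div_le_div_iff₀ (by positivity) hp0]
      nlinarith
    have hA : (∑' n : ℕ, exp (-(F n * t))) ≤ Gamma (1/p+1) * (c/2) ^ (-1/p) * t ^ (-1/p) := by
      obtain ⟨hes, he1, _⟩ := aux_exp_sum hp (by positivity : (0:ℝ) < c*t/2)
      have := Summable.tsum_le_tsum (hdom t ht) (hsumm t ht) (by simpa [neg_mul] using hes)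
      refine this.trans ?_
      have e1 : (∑' n : ℕ, exp (-(c*t/2 * ((n:ℝ)+1) ^ p))) = ∑' n : ℕ, exp (-(c*t/2) * ((n:ℝ)+1) ^ p) := by
        congr 1; ext n; rw [neg_mul]
      rw [e1]
      refine he1.trans (le_of_eq ?_)
      rw [show c*t/2 = (c/2)*t by ring, Real.mul_rpow (by positivity) ht.le]
      ring
    have hM : Gamma (1/p+1) * (a*t) ^ (-1/p) ≤ Gamma (1/p+1) * a ^ (-1/p) * t ^ (-1/p) := by
      rw [Real.mul_rpow ha.le ht.le]; ring_nf; rfl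
    have hApos : 0 ≤ (∑' n : ℕ, exp (-(F n * t))) := tsum_nonneg fun n => (exp_pos _).le
    have hMpos : 0 ≤ Gamma (1/p+1) * (a*t) ^ (-1/p) := by positivity
    calc |(∑' n : ℕ, exp (-(F n * t))) - Gamma (1/p+1) * (a*t) ^ (-1/p)|
        ≤ Gamma (1/p+1) * (c/2) ^ (-1/p) * t ^ (-1/p) + Gamma (1/p+1) * a ^ (-1/p) * t ^ (-1/p) := by
          rw [abs_sub_le_iff]
          constructor <;> nlinarith [hA, hM, hApos, hMpos,
            mul_nonneg (mul_nonneg hGpos.le (rpow_nonneg (by positivity : (0:ℝ) ≤ c/2) (-1/p))) (rpow_nonneg ht.le (-1/p))]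
      _ = C₂ * t ^ (-1/p) := by rw [hC₂]; ring
      _ ≤ C₂ * t ^ (-(1/(2*p))) := mul_le_mul_of_nonneg_left htp hC₂pos.le
      _ ≤ (C₁ + C₂) * t ^ (-(1/(2*p))) := by
          apply mul_le_mul_of_nonneg_right (by linarith) (rpow_nonneg ht.le _)

lemma aux_log_series_s13 {u : ℝ} (hu0 : 0 ≤ u) (hu1 : u < 1) :
    HasSum (fun k : ℕ => u ^ (k+1) / ((k:ℝ)+1)) (-Real.log (1 - u)) := by
  have hz : ‖(u:ℂ)‖ < 1 := by simpa [Complex.norm_real, abs_of_nonneg hu0] using hu1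
  have hc := Complex.hasSum_taylorSeries_neg_log hz
  have h1u : (0:ℝ) ≤ 1 - u := by linarith
  have hre : HasSum (fun m : ℕ => ((u ^ m / (m:ℝ) : ℝ))) (-Real.log (1 - u)) := by
    rw [← Complex.hasSum_ofReal]
    convert hc using 2 with m
    · push_cast; ring
    · push_cast [Complex.ofReal_log h1u]; ring
  have h0 : (u ^ 0 / ((0:ℕ):ℝ)) = 0 := by norm_num
  have := (hasSum_nat_add_iff' (f := fun m : ℕ => u ^ m / (m:ℝ)) 1).mpr hre
  simp only [Finset.range_one, Finset.sum_singleton, h0, sub_zero] at this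
  convert this using 2 with k
  push_cast; rfl
  push_cast; ring

lemma aux_swap {F : ℕ → ℝ} {δ : ℝ} (hδ : 0 < δ) (hFδ : ∀ n, δ ≤ F n)
    (hsumm : ∀ t : ℝ, 0 < t → Summable (fun n : ℕ => exp (-(F n * t))))
    {x : ℝ} (hx : 0 < x) :
    (-∑' n : ℕ, Real.log (1 - exp (-(F n * x)))) =
      ∑' k : ℕ, (1/((k:ℝ)+1)) * ∑' n : ℕ, exp (-(F n * (((k:ℝ)+1) * x))) := by
  set g : ℕ → ℕ → ℝ := fun n k => (1/((k:ℝ)+1)) * exp (-(F n * (((k:ℝ)+1) * x))) with hg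
  have hgnn : ∀ n k, 0 ≤ g n k := fun n k => by positivity
  have hu : ∀ n : ℕ, exp (-(F n * x)) < 1 := by
    intro n
    rw [exp_lt_one_iff]
    have := hFδ n
    nlinarith
  have hterm : ∀ n : ℕ, HasSum (fun k => g n k) (-Real.log (1 - exp (-(F n * x)))) := by
    intro n
    have h := aux_log_series_s13 (exp_pos (-(F n * x))).le (hu n)
    convert h using 2 with k
    have hpow : exp (-(F n * x)) ^ (k+1) = exp (-(F n * (((k:ℝ)+1) * x))) := by
      rw [← Real.exp_nat_mul]; congr 1; push_cast; ring
    rw [hg]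
    simp only
    rw [hpow]
    ring
  -- summability of the double sum
  have hUb : exp (-(δ * x)) < 1 := by rw [exp_lt_one_iff]; nlinarith
  have hlogsum : Summable (fun n : ℕ => -Real.log (1 - exp (-(F n * x)))) := by
    apply Summable.of_nonneg_of_le
    · intro n
      have h1 : exp (-(F n * x)) < 1 := hu n
      have h2 : (0:ℝ) ≤ 1 - exp (-(F n * x)) := by linarith
      have := Real.log_nonpos h2 (by linarith [exp_pos (-(F n * x))])
      linarith
    · intro n
      show -Real.log (1 - exp (-(F n * x))) ≤ (1 - exp (-(δ * x)))⁻¹ * exp (-(F n * x))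
      have h1 : exp (-(F n * x)) < 1 := hu n
      have h2 : (0:ℝ) < 1 - exp (-(F n * x)) := by linarith
      have h3 := Real.log_le_sub_one_of_pos (x := (1 - exp (-(F n * x)))⁻¹) (by positivity)
      rw [Real.log_inv] at h3
      have h4 : (1 - exp (-(F n * x)))⁻¹ - 1 = (1 - exp (-(F n * x)))⁻¹ * exp (-(F n * x)) := by
        field_simp
        ring
      rw [h4] at h3
      refine h3.trans ?_
      apply mul_le_mul_of_nonneg_right _ (exp_pos _).le
      have h5 : 1 - exp (-(δ * x)) ≤ 1 - exp (-(F n * x)) := by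
        have : exp (-(F n * x)) ≤ exp (-(δ * x)) := by
          apply exp_le_exp.mpr
          have := hFδ n
          nlinarith
        linarith
      exact inv_anti₀ (by linarith [hUb]) h5
    · exact (hsumm x hx).mul_left _
  have hG0 : Summable (fun p : ℕ × ℕ => g p.1 p.2) := by
    rw [summable_prod_of_nonneg (f := fun p : ℕ × ℕ => g p.1 p.2) (fun p => hgnn p.1 p.2)]
    constructor
    · intro n; exact (hterm n).summable
    · apply Summable.congr hlogsum
      intro n
      exact ((hterm n).tsum_eq).symm
  have hG : Summable (Function.uncurry g) := hG0
  calc (-∑' n : ℕ, Real.log (1 - exp (-(F n * x))))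
      = ∑' n : ℕ, -Real.log (1 - exp (-(F n * x))) := by rw [tsum_neg]
    _ = ∑' n : ℕ, ∑' k : ℕ, g n k := by
        apply tsum_congr; intro n; exact ((hterm n).tsum_eq).symm
    _ = ∑' k : ℕ, ∑' n : ℕ, g n k := (Summable.tsum_comm hG).symm
    _ = ∑' k : ℕ, (1/((k:ℝ)+1)) * ∑' n : ℕ, exp (-(F n * (((k:ℝ)+1) * x))) := by
        apply tsum_congr; intro k
        rw [hg]
        simp only
        rw [tsum_mul_left]

lemma poly_bounds (r : ℕ) (hr : 1 ≤ r) (P : Polynomial ℚ) (hPdeg : P.natDegree = r)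
    (hPlc : 0 < P.leadingCoeff)
    (f : ℤ → ℤ) (hfP : ∀ ℓ : ℤ, (f ℓ : ℚ) = P.eval (ℓ : ℚ))
    (hfpos : ∀ ℓ : ℤ, 1 ≤ ℓ → 0 < f ℓ) :
    ∃ B c : ℝ, 0 ≤ B ∧ 0 < c ∧ c ≤ (P.leadingCoeff : ℝ) ∧
      (∀ n : ℕ, c * ((n:ℝ)+1) ^ (r:ℝ) ≤ ((f ((n:ℤ)+1) : ℤ) : ℝ)) ∧
      (∀ n : ℕ, |((f ((n:ℤ)+1) : ℤ) : ℝ) - (P.leadingCoeff : ℝ) * ((n:ℝ)+1) ^ (r:ℝ)|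
        ≤ B * ((n:ℝ)+1) ^ ((r:ℝ)-1)) := by
  set a : ℝ := (P.leadingCoeff : ℝ) with ha
  have ha0 : 0 < a := by rw [ha]; exact_mod_cast hPlc
  set B : ℝ := ∑ i ∈ Finset.range r, |(P.coeff i : ℝ)| with hB
  have hB0 : 0 ≤ B := Finset.sum_nonneg fun i _ => abs_nonneg _
  -- evaluation identity over ℝ
  have heval : ∀ m : ℕ, ((f (m:ℤ) : ℤ) : ℝ)
      = (∑ i ∈ Finset.range r, (P.coeff i : ℝ) * (m:ℝ)^i) + a * (m:ℝ)^r := by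
    intro m
    have h1 : (f (m:ℤ) : ℚ) = P.eval ((m:ℕ) : ℚ) := by
      have := hfP (m:ℤ); push_cast at this ⊢; exact this
    have h2 : P.eval ((m:ℕ) : ℚ) = ∑ i ∈ Finset.range (r+1), P.coeff i * ((m:ℕ):ℚ)^i := by
      rw [Polynomial.eval_eq_sum_range, hPdeg]
    rw [Finset.sum_range_succ] at h2
    have h3 : P.coeff r = P.leadingCoeff := by rw [← hPdeg]; rfl
    have h4 : (f (m:ℤ) : ℚ) = (∑ i ∈ Finset.range r, P.coeff i * ((m:ℕ):ℚ)^i)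
        + P.leadingCoeff * ((m:ℕ):ℚ)^r := by rw [h1, h2, h3]
    have h5 := congrArg (fun q : ℚ => (q : ℝ)) h4
    push_cast at h5
    convert h5 using 2
  -- the closeness bound, with natural number powers
  have hclose : ∀ m : ℕ, 1 ≤ m → |((f (m:ℤ) : ℤ) : ℝ) - a * (m:ℝ)^r| ≤ B * (m:ℝ)^(r-1) := by
    intro m hm
    rw [heval m, add_sub_cancel_right]
    have hm1 : (1:ℝ) ≤ (m:ℝ) := by exact_mod_cast hm
    calc |∑ i ∈ Finset.range r, (P.coeff i : ℝ) * (m:ℝ)^i|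
        ≤ ∑ i ∈ Finset.range r, |(P.coeff i : ℝ) * (m:ℝ)^i| := Finset.abs_sum_le_sum_abs _ _
      _ ≤ ∑ i ∈ Finset.range r, |(P.coeff i : ℝ)| * (m:ℝ)^(r-1) := by
          apply Finset.sum_le_sum
          intro i hi
          rw [abs_mul, abs_of_nonneg (by positivity : (0:ℝ) ≤ (m:ℝ)^i)]
          apply mul_le_mul_of_nonneg_left _ (abs_nonneg _)
          exact pow_le_pow_right₀ hm1 (by have := Finset.mem_range.mp hi; omega)
      _ = B * (m:ℝ)^(r-1) := by rw [hB, Finset.sum_mul]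
  have hge1 : ∀ m : ℕ, 1 ≤ m → (1:ℝ) ≤ ((f (m:ℤ) : ℤ) : ℝ) := by
    intro m hm
    have := hfpos (m:ℤ) (by exact_mod_cast hm)
    exact_mod_cast this
  -- choose c
  set N : ℕ := ⌈2*B/a⌉₊ with hN
  set c : ℝ := min (a/2) ((((N:ℝ)+1)^r)⁻¹) with hc
  have hc0 : 0 < c := lt_min (by positivity) (by positivity)
  refine ⟨B, c, hB0, hc0, (min_le_left _ _).trans (by linarith), ?_, ?_⟩
  · -- lower bound
    intro n
    set m : ℕ := n + 1 with hm
    have hm1 : 1 ≤ m := Nat.le_add_left 1 n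
    have hmr : (m:ℝ) = (n:ℝ)+1 := by push_cast [hm]; ring
    have hcast : ((n:ℝ)+1) ^ (r:ℝ) = ((n:ℝ)+1) ^ r := by
      rw [rpow_natCast]
    rw [hcast, ← hmr]
    have hmz : ((n:ℤ)+1) = (m:ℤ) := by push_cast [hm]; ring
    rw [hmz]
    have hmain := hclose m hm1
    have hm1R : (1:ℝ) ≤ (m:ℝ) := by exact_mod_cast hm1
    rcases le_or_gt (2*B/a) (m:ℝ) with hcase | hcase
    · -- large m
      have h1 : a * (m:ℝ)^r - B * (m:ℝ)^(r-1) ≤ ((f (m:ℤ) : ℤ) : ℝ) := by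
        have := abs_le.mp hmain
        linarith [this.1]
      have h2 : B * (m:ℝ)^(r-1) ≤ (a/2) * (m:ℝ)^r := by
        have hpow : (m:ℝ)^r = (m:ℝ) * (m:ℝ)^(r-1) := by
          conv_lhs => rw [show r = 1 + (r-1) by omega]
          rw [pow_add, pow_one]
        rw [hpow]
        have h3 : 2*B/a ≤ (m:ℝ) := hcase
        have h4 : 2*B ≤ a * (m:ℝ) := by
          rw [div_le_iff₀ ha0] at h3; linarith
        have h5 : (0:ℝ) ≤ (m:ℝ)^(r-1) := by positivity
        nlinarith
      have h6 : c * (m:ℝ)^r ≤ (a/2) * (m:ℝ)^r := by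
        apply mul_le_mul_of_nonneg_right (min_le_left _ _) (by positivity)
      nlinarith
    · -- small m
      have hmN : (m:ℝ) ≤ (N:ℝ)+1 := by
        have := Nat.le_ceil (2*B/a)
        rw [← hN] at this
        linarith
      have h1 : c * (m:ℝ)^r ≤ ((((N:ℝ)+1)^r)⁻¹) * (((N:ℝ)+1))^r := by
        apply mul_le_mul (min_le_right _ _) _ (by positivity) (by positivity)
        exact pow_le_pow_left₀ (by positivity) hmN r
      rw [inv_mul_cancel₀ (by positivity)] at h1
      exact h1.trans (hge1 m hm1)
  · -- closeness in rpow form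
    intro n
    set m : ℕ := n + 1 with hm
    have hm1 : 1 ≤ m := Nat.le_add_left 1 n
    have hmr : (m:ℝ) = (n:ℝ)+1 := by push_cast [hm]; ring
    have hc1 : ((n:ℝ)+1) ^ (r:ℝ) = ((n:ℝ)+1) ^ r := by rw [rpow_natCast]
    have hc2 : ((n:ℝ)+1) ^ ((r:ℝ)-1) = ((n:ℝ)+1) ^ (r-1 : ℕ) := by
      rw [show (r:ℝ)-1 = ((r-1 : ℕ):ℝ) by push_cast [Nat.cast_sub hr]; ring]
      rw [rpow_natCast]
    rw [hc1, hc2, ← hmr]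
    have hmz : ((n:ℤ)+1) = (m:ℤ) := by push_cast [hm]; ring
    rw [hmz]
    exact hclose m hm1

lemma aux_summable_rpow {q : ℝ} (hq : 1 < q) :
    Summable (fun k : ℕ => ((k:ℝ)+1) ^ (-q)) := by
  have h : Summable (fun n : ℕ => (n:ℝ) ^ (-q)) := Real.summable_nat_rpow.mpr (by linarith)
  have h2 := (summable_nat_add_iff 1).mpr h
  apply h2.congr
  intro n
  congr 1
  push_cast
  ring

theorem stmt13 (r : ℕ) (hr : 1 ≤ r) (P : Polynomial ℚ) (hPdeg : P.natDegree = r)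
    (hPlc : 0 < P.leadingCoeff)
    (f : ℤ → ℤ) (hfP : ∀ ℓ : ℤ, (f ℓ : ℚ) = P.eval (ℓ : ℚ))
    (hfpos : ∀ ℓ : ℤ, 1 ≤ ℓ → 0 < f ℓ)
    (hfprime : ∀ p : ℕ, p.Prime → ∃ ℓ : ℤ, ¬ ((p : ℤ) ∣ f ℓ)) :
    ∃ C x₀ : ℝ, 0 < C ∧ 0 < x₀ ∧
      ∀ x : ℝ, 0 < x → x < x₀ →
        ‖((-∑' n : ℕ, Real.log (1 - Real.exp (-(f ((n : ℤ) + 1) : ℝ) * x)) : ℝ) : ℂ) -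
            riemannZeta (1 + 1 / (r : ℂ)) * Complex.Gamma (1 + 1 / (r : ℂ)) *
              (((P.leadingCoeff : ℝ) * x : ℝ) : ℂ) ^ (-(1 / (r : ℂ)))‖ ≤
          C * x ^ (-(1 : ℝ) / (2 * r)) := by
  obtain ⟨B, c, hB0, hc0, hca, hlow, hclose⟩ := poly_bounds r hr P hPdeg hPlc f hfP hfpos
  set a : ℝ := (P.leadingCoeff : ℝ) with ha
  have ha0 : 0 < a := by rw [ha]; exact_mod_cast hPlc
  set p : ℝ := (r:ℝ) with hpdef
  have hp : 1 ≤ p := by rw [hpdef]; exact_mod_cast hr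
  have hp0 : 0 < p := lt_of_lt_of_le one_pos hp
  set F : ℕ → ℝ := fun n => ((f ((n:ℤ)+1) : ℤ) : ℝ) with hF
  obtain ⟨hsumm, C₀, hC₀, hest⟩ := main_est hp ha0 hc0 hca hB0 hlow hclose
  have hFδ : ∀ n, c ≤ F n := by
    intro n
    refine le_trans ?_ (hlow n)
    have h1 : (1:ℝ) ≤ ((n:ℝ)+1) ^ p := Real.one_le_rpow (by push_cast; linarith [Nat.cast_nonneg (α := ℝ) n]) hp0.le
    nlinarith
  set G : ℝ := Real.Gamma (1/p + 1) with hG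
  have hGpos : 0 < G := Real.Gamma_pos_of_pos (by positivity)
  set Z₁ : ℝ := ∑' k : ℕ, ((k:ℝ)+1) ^ (-(1 + 1/p)) with hZ₁
  set Z₂ : ℝ := ∑' k : ℕ, ((k:ℝ)+1) ^ (-(1 + 1/(2*p))) with hZ₂
  have hp1 : (0:ℝ) < 1/p := by positivity
  have hp2 : (0:ℝ) < 1/(2*p) := by positivity
  have hZ₁s : Summable (fun k : ℕ => ((k:ℝ)+1) ^ (-(1 + 1/p))) :=
    aux_summable_rpow (by linarith)
  have hZ₂s : Summable (fun k : ℕ => ((k:ℝ)+1) ^ (-(1 + 1/(2*p)))) :=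
    aux_summable_rpow (by linarith)
  have hZ₂0 : 0 ≤ Z₂ := tsum_nonneg fun k => rpow_nonneg (by positivity) _
  refine ⟨C₀ * Z₂ + 1, 1, by positivity, one_pos, ?_⟩
  intro x hx hx1
  have hax : 0 < a * x := by positivity
  -- real-side main estimate
  set S : ℝ := -∑' n : ℕ, Real.log (1 - exp (-(F n * x))) with hS
  set W : ℝ := (a*x) ^ (-(1/p)) with hW
  have hWpos : 0 < W := rpow_pos_of_pos hax _
  have hreal : |S - G * W * Z₁| ≤ (C₀ * Z₂) * x ^ (-(1:ℝ) / (2 * p)) := by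
    have hswap := aux_swap hc0 hFδ hsumm hx
    rw [← hS] at hswap
    -- per-k estimate
    have hker : ∀ k : ℕ,
        |(1/((k:ℝ)+1)) * (∑' n : ℕ, exp (-(F n * (((k:ℝ)+1) * x))))
          - G * W * ((k:ℝ)+1) ^ (-(1 + 1/p))|
        ≤ (C₀ * x ^ (-(1/(2*p)))) * ((k:ℝ)+1) ^ (-(1 + 1/(2*p))) := by
      intro k
      set K : ℝ := (k:ℝ)+1 with hK
      have hK0 : (0:ℝ) < K := by positivity
      have ht : 0 < K * x := by positivity
      have h1 := hest (K * x) ht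
      have h2 : |(1/K) * ((∑' n : ℕ, exp (-(F n * (K * x))))
          - G * (a*(K*x)) ^ (-1/p))| ≤ (1/K) * (C₀ * (K*x) ^ (-(1/(2*p)))) := by
        rw [abs_mul, abs_of_pos (by positivity : (0:ℝ) < 1/K)]
        exact mul_le_mul_of_nonneg_left h1 (by positivity)
      have e1 : (1/K) * ((∑' n : ℕ, exp (-(F n * (K * x))))
          - G * (a*(K*x)) ^ (-1/p))
          = (1/K) * (∑' n : ℕ, exp (-(F n * (K * x)))) - G * W * K ^ (-(1 + 1/p)) := by
        have hsplit : (a*(K*x)) ^ ((-1:ℝ)/p) = K ^ (-(1/p)) * W := by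
          rw [show a*(K*x) = K * (a*x) by ring, Real.mul_rpow hK0.le hax.le, hW]
          congr 1 <;> rw [neg_div]
        rw [hsplit]
        have hKe : (1/K) * K ^ (-(1/p)) = K ^ (-(1 + 1/p)) := by
          rw [one_div, ← Real.rpow_neg_one K, ← Real.rpow_add hK0]
          congr 1; ring
        rw [← hKe]
        ring
      have e2 : (1/K) * (C₀ * (K*x) ^ (-(1/(2*p))))
          = (C₀ * x ^ (-(1/(2*p)))) * K ^ (-(1 + 1/(2*p))) := by
        rw [Real.mul_rpow hK0.le hx.le]
        have hKe : (1/K) * K ^ (-(1/(2*p))) = K ^ (-(1 + 1/(2*p))) := by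
          rw [one_div, ← Real.rpow_neg_one K, ← Real.rpow_add hK0]
          congr 1; ring
        rw [← hKe]
        ring
      rw [e1] at h2
      rw [e2] at h2
      exact h2
    -- summability of both series
    have hs₂ : Summable (fun k : ℕ => G * W * ((k:ℝ)+1) ^ (-(1 + 1/p))) := hZ₁s.mul_left _
    have hw : Summable (fun k : ℕ => (C₀ * x ^ (-(1/(2*p)))) * ((k:ℝ)+1) ^ (-(1 + 1/(2*p)))) :=
      hZ₂s.mul_left _
    have hs₁ : Summable (fun k : ℕ =>
        (1/((k:ℝ)+1)) * (∑' n : ℕ, exp (-(F n * (((k:ℝ)+1) * x))))) := by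
      apply Summable.of_nonneg_of_le
        (fun k => mul_nonneg (by positivity) (tsum_nonneg fun n => (exp_pos _).le))
        (fun k => ?_) (hs₂.add hw)
      have := (abs_le.mp (hker k)).2
      linarith
    have habs : Summable (fun k : ℕ =>
        |(1/((k:ℝ)+1)) * (∑' n : ℕ, exp (-(F n * (((k:ℝ)+1) * x))))
          - G * W * ((k:ℝ)+1) ^ (-(1 + 1/p))|) :=
      Summable.of_nonneg_of_le (fun k => abs_nonneg _) hker hw
    have hM : G * W * Z₁ = ∑' k : ℕ, G * W * ((k:ℝ)+1) ^ (-(1 + 1/p)) := by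
      rw [hZ₁, tsum_mul_left]
    have hdiff : S - G * W * Z₁ = ∑' k : ℕ,
        ((1/((k:ℝ)+1)) * (∑' n : ℕ, exp (-(F n * (((k:ℝ)+1) * x))))
          - G * W * ((k:ℝ)+1) ^ (-(1 + 1/p))) := by
      rw [hswap, hM, Summable.tsum_sub hs₁ hs₂]
    rw [hdiff]
    have hbound : |∑' k : ℕ,
        ((1/((k:ℝ)+1)) * (∑' n : ℕ, exp (-(F n * (((k:ℝ)+1) * x))))
          - G * W * ((k:ℝ)+1) ^ (-(1 + 1/p)))|
        ≤ ∑' k : ℕ, (C₀ * x ^ (-(1/(2*p)))) * ((k:ℝ)+1) ^ (-(1 + 1/(2*p))) := by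
      calc |∑' k : ℕ, ((1/((k:ℝ)+1)) * (∑' n : ℕ, exp (-(F n * (((k:ℝ)+1) * x))))
            - G * W * ((k:ℝ)+1) ^ (-(1 + 1/p)))|
          ≤ ∑' k : ℕ, |(1/((k:ℝ)+1)) * (∑' n : ℕ, exp (-(F n * (((k:ℝ)+1) * x))))
            - G * W * ((k:ℝ)+1) ^ (-(1 + 1/p))| := by
            have hn := norm_tsum_le_tsum_norm
              (f := fun k : ℕ => (1/((k:ℝ)+1)) * (∑' n : ℕ, exp (-(F n * (((k:ℝ)+1) * x))))
                - G * W * ((k:ℝ)+1) ^ (-(1 + 1/p)))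
              (by simpa [Real.norm_eq_abs] using habs)
            simpa [Real.norm_eq_abs] using hn
        _ ≤ _ := Summable.tsum_le_tsum hker habs hw
    refine hbound.trans ?_
    rw [tsum_mul_left, ← hZ₂]
    have hxe : x ^ (-(1:ℝ) / (2 * p)) = x ^ (-(1/(2*p))) := by congr 1; ring
    rw [hxe]
    exact le_of_eq (by ring)
  -- complex-side conversion
  set σ : ℝ := 1 + 1/p with hσ
  have hσ1 : 1 < σ := by rw [hσ]; linarith
  have hs : (1 + 1/(r:ℂ)) = ((σ:ℝ):ℂ) := by
    rw [hσ, hpdef]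
    push_cast
    ring
  have hzeta : riemannZeta (1 + 1/(r:ℂ)) = ((Z₁:ℝ):ℂ) := by
    rw [hs, zeta_eq_tsum_one_div_nat_add_one_cpow (by simpa using hσ1)]
    rw [hZ₁, Complex.ofReal_tsum]
    apply tsum_congr
    intro n
    have h1 : ((n:ℂ)+1) = (((n:ℝ)+1 : ℝ):ℂ) := by push_cast; ring
    have h2 : (0:ℝ) ≤ (n:ℝ)+1 := by positivity
    rw [h1, ← Complex.ofReal_cpow h2 σ, ← Complex.ofReal_one, ← Complex.ofReal_div]
    congr 1
    rw [show -(1 + 1/p) = -σ by rw [hσ], Real.rpow_neg h2, one_div]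
  have hGamma : Complex.Gamma (1 + 1/(r:ℂ)) = ((G:ℝ):ℂ) := by
    rw [hs, Complex.Gamma_ofReal]
    congr 1
    rw [hG, hσ]
    ring
  have hWc : (((a * x : ℝ)) : ℂ) ^ (-(1/(r:ℂ))) = ((W:ℝ):ℂ) := by
    have he : (-(1/(r:ℂ))) = ((-(1/p) : ℝ):ℂ) := by
      rw [hpdef]; push_cast; ring
    rw [he, ← Complex.ofReal_cpow hax.le, hW]
  -- final computation
  have hgoal : ((-∑' n : ℕ, Real.log (1 - Real.exp (-(f ((n : ℤ) + 1) : ℝ) * x)) : ℝ) : ℂ) -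
      riemannZeta (1 + 1 / (r : ℂ)) * Complex.Gamma (1 + 1 / (r : ℂ)) *
        (((P.leadingCoeff : ℝ) * x : ℝ) : ℂ) ^ (-(1 / (r : ℂ)))
      = (((S - G * W * Z₁ : ℝ)) : ℂ) := by
    rw [hzeta, hGamma]
    rw [show (((P.leadingCoeff : ℝ) * x : ℝ) : ℂ) ^ (-(1 / (r : ℂ))) = ((W:ℝ):ℂ) from hWc]
    rw [show ((-∑' n : ℕ, Real.log (1 - Real.exp (-(f ((n : ℤ) + 1) : ℝ) * x)) : ℝ) : ℂ)
        = ((S:ℝ):ℂ) by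
      norm_cast
      rw [hS]
      congr 1
      apply tsum_congr
      intro n
      congr 2
      rw [hF]
      push_cast
      ring]
    push_cast
    ring
  rw [hgoal, Complex.norm_real, Real.norm_eq_abs]
  have hxe2 : x ^ (-(1:ℝ) / (2 * (r:ℝ))) = x ^ (-(1:ℝ) / (2 * p)) := by
    rw [hpdef]
  refine hreal.trans ?_
  rw [← hxe2] at *
  have hxp : 0 < x ^ (-(1:ℝ) / (2 * (r:ℝ))) := rpow_pos_of_pos hx _
  nlinarith
end

section
/- Let a_r > 0 denote the leading coefficient of P. There exist constants C > 0 and x₀ > 0 such that for all x ∈ (0, x₀), | Σ_{ℓ ≥ 1} f(ℓ)/(e^{f(ℓ)x} − 1) − ζ(1 + 1/r)·Γ(1 + 1/r) / (r · a_r^{1/r} · x^{1+1/r}) | ≤ C · x^{−1−1/(2r)}. -/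
open Real Set MeasureTheory

lemma exp_sub_one_pos' {s : ℝ} (hs : 0 < s) : 0 < Real.exp s - 1 := by
  have h := Real.add_one_le_exp s
  nlinarith

lemma h_pos {x u : ℝ} (hx : 0 < x) (hu : 0 < u) : 0 < u / (Real.exp (u * x) - 1) :=
  div_pos hu (exp_sub_one_pos' (mul_pos hu hx))

lemma h_le_inv {x u : ℝ} (hx : 0 < x) (hu : 0 < u) : u / (Real.exp (u * x) - 1) ≤ 1 / x := by
  have h1 : u * x ≤ Real.exp (u * x) - 1 := by linarith [Real.add_one_le_exp (u * x)]
  have h2 : 0 < u * x := mul_pos hu hx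
  calc u / (Real.exp (u * x) - 1) ≤ u / (u * x) :=
        div_le_div_of_nonneg_left hu.le h2 h1
    _ = 1 / x := by field_simp

lemma cube_le_exp_sub_one {s : ℝ} (hs : 0 ≤ s) : s ^ 3 / 27 ≤ Real.exp s - 1 := by
  have h1 : 1 + s / 3 ≤ Real.exp (s / 3) := by linarith [Real.add_one_le_exp (s / 3)]
  have h2 : (1 + s / 3) ^ 3 ≤ (Real.exp (s / 3)) ^ 3 := pow_le_pow_left₀ (by linarith) h1 3
  have h3 : (Real.exp (s / 3)) ^ 3 = Real.exp s := by
    rw [← Real.exp_nat_mul]; norm_num; ring_nf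
  nlinarith [sq_nonneg s, hs]

lemma h_le_cube {x u : ℝ} (hx : 0 < x) (hu : 0 < u) :
    u / (Real.exp (u * x) - 1) ≤ 27 / (x ^ 3 * u ^ 2) := by
  have h1 : (u * x) ^ 3 / 27 ≤ Real.exp (u * x) - 1 := cube_le_exp_sub_one (by positivity)
  have h2 : 0 < (u * x) ^ 3 / 27 := by positivity
  calc u / (Real.exp (u * x) - 1) ≤ u / ((u * x) ^ 3 / 27) :=
        div_le_div_of_nonneg_left hu.le h2 h1
    _ = 27 / (x ^ 3 * u ^ 2) := by field_simp

lemma h_anti {x u v : ℝ} (hx : 0 < x) (hu : 0 < u) (huv : u ≤ v) :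
    v / (Real.exp (v * x) - 1) ≤ u / (Real.exp (u * x) - 1) := by
  rcases eq_or_lt_of_le huv with rfl | huv'
  · exact le_refl _
  have hv : 0 < v := hu.trans huv'
  have hdu : 0 < Real.exp (u * x) - 1 := exp_sub_one_pos' (mul_pos hu hx)
  have hdv : 0 < Real.exp (v * x) - 1 := exp_sub_one_pos' (mul_pos hv hx)
  rw [div_le_div_iff₀ hdv hdu]
  have hw1 : (0:ℝ) ≤ u / v := (div_pos hu hv).le
  have hw2 : (0:ℝ) ≤ 1 - u / v := by
    have : u / v ≤ 1 := (div_le_one hv).mpr huv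
    linarith
  have hcvx := convexOn_exp.2 (mem_univ (v * x)) (mem_univ (0 : ℝ)) hw1 hw2 (by ring)
  simp only [smul_eq_mul, mul_zero, add_zero, Real.exp_zero, mul_one] at hcvx
  have hvne : v ≠ 0 := hv.ne'
  have harg : u / v * (v * x) = u * x := by field_simp
  rw [harg] at hcvx
  have := mul_le_mul_of_nonneg_left hcvx hv.le
  have hexp : v * (u / v * Real.exp (v * x) + (1 - u / v)) = u * Real.exp (v * x) + v - u := by
    field_simp; ring
  nlinarith [this, hexp]



open Real Set MeasureTheory Polynomial

-- Bernoulli-type: (s+b)^r ≥ s^r + r*b*s^(r-1)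
lemma bern_pow {r : ℕ} (hr : 1 ≤ r) {s b : ℝ} (hs : 0 < s) (hb : 0 ≤ b) :
    s ^ r + (r : ℝ) * b * s ^ (r - 1) ≤ (s + b) ^ r := by
  have key : 1 + (r : ℝ) * (b / s) ≤ (1 + b / s) ^ r :=
    one_add_mul_le_pow (le_trans (by norm_num) (by positivity : (0:ℝ) ≤ b / s)) r
  have h1 : (1 + b / s) ^ r * s ^ r = (s + b) ^ r := by
    rw [← mul_pow]; congr 1; field_simp
  have h2 : s ^ r = s ^ (r - 1) * s := by
    conv_lhs => rw [← Nat.sub_add_cancel hr, pow_succ]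
  have h3 := mul_le_mul_of_nonneg_right key (pow_nonneg hs.le r)
  rw [h1] at h3
  calc s ^ r + (r:ℝ) * b * s ^ (r-1) = (1 + (r:ℝ) * (b / s)) * s ^ r := by
        rw [h2]; field_simp
    _ ≤ (s + b) ^ r := h3

-- coefficient bound: |eval t - lc * t^r| ≤ C * t^(r-1) for t ≥ 1
lemma poly_sandwich_coeff (Q : Polynomial ℝ) {r : ℕ} (hr : 1 ≤ r) (hdeg : Q.natDegree = r)
    {t : ℝ} (ht : 1 ≤ t) :
    |Q.eval t - Q.leadingCoeff * t ^ r| ≤ (∑ i ∈ Finset.range r, |Q.coeff i|) * t ^ (r - 1) := by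
  have ht0 : (0:ℝ) < t := lt_of_lt_of_le one_pos ht
  have heval : Q.eval t = ∑ i ∈ Finset.range (r + 1), Q.coeff i * t ^ i := by
    rw [eval_eq_sum_range' (by omega : Q.natDegree < r + 1)]
  have hlc : Q.coeff r = Q.leadingCoeff := by rw [Polynomial.leadingCoeff, hdeg]
  rw [heval, Finset.sum_range_succ, hlc]
  simp only [add_sub_cancel_right]
  calc |∑ i ∈ Finset.range r, Q.coeff i * t ^ i|
      ≤ ∑ i ∈ Finset.range r, |Q.coeff i * t ^ i| := Finset.abs_sum_le_sum_abs _ _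
    _ ≤ ∑ i ∈ Finset.range r, |Q.coeff i| * t ^ (r - 1) := by
        apply Finset.sum_le_sum
        intro i hi
        rw [abs_mul, abs_of_pos (pow_pos ht0 i)]
        exact mul_le_mul_of_nonneg_left
          (pow_le_pow_right₀ ht (by exact Nat.le_sub_one_of_lt (Finset.mem_range.mp hi))) (abs_nonneg _)
    _ = (∑ i ∈ Finset.range r, |Q.coeff i|) * t ^ (r - 1) := by rw [Finset.sum_mul]

-- the sandwich
lemma poly_sandwich (Q : Polynomial ℝ) {r : ℕ} (hr : 1 ≤ r) (hdeg : Q.natDegree = r)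
    (ha : 0 < Q.leadingCoeff) :
    ∃ B : ℕ, 1 ≤ B ∧ ∀ t : ℝ, 2 * B ≤ t →
      Q.leadingCoeff * (t - B) ^ r ≤ Q.eval t ∧ Q.eval t ≤ Q.leadingCoeff * (t + B) ^ r := by
  set a := Q.leadingCoeff with ha'
  set C := ∑ i ∈ Finset.range r, |Q.coeff i| with hC
  have hC0 : 0 ≤ C := Finset.sum_nonneg fun i _ => abs_nonneg _
  obtain ⟨B, hB1, hB⟩ : ∃ B : ℕ, 1 ≤ B ∧ C * 2 ^ (r - 1) ≤ a * B := by
    refine ⟨⌈C * 2 ^ (r - 1) / a⌉₊ + 1, le_add_self, ?_⟩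
    have h1 : C * 2 ^ (r - 1) / a ≤ (⌈C * 2 ^ (r - 1) / a⌉₊ + 1 : ℝ) :=
      (Nat.le_ceil _).trans (by push_cast; linarith)
    calc C * 2 ^ (r-1) = a * (C * 2 ^ (r-1) / a) := by field_simp
      _ ≤ a * _ := by
          apply mul_le_mul_of_nonneg_left _ ha.le
          exact_mod_cast h1
  refine ⟨B, hB1, fun t ht => ?_⟩
  have hB0 : (0:ℝ) < B := by exact_mod_cast hB1
  have hB1' : (1:ℝ) ≤ B := by exact_mod_cast hB1
  have ht1 : (1:ℝ) ≤ t := by linarith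
  have ht0 : (0:ℝ) < t := by linarith
  have habs := poly_sandwich_coeff Q hr hdeg ht1
  rw [← ha', ← hC] at habs
  have hCa : C ≤ a * B := by
    have h2 : (1:ℝ) ≤ 2 ^ (r - 1) := one_le_pow₀ (by norm_num)
    nlinarith
  constructor
  · -- lower bound
    have htB : (0:ℝ) < t - B := by nlinarith
    have hb : a * (t - B) ^ r + a * B * (t - B) ^ (r - 1) ≤ a * t ^ r := by
      have := bern_pow hr htB (le_of_lt hB0)
      have h3 : ((t - B) + B) = t := by ring
      have h4 := mul_le_mul_of_nonneg_left this ha.le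
      rw [h3] at h4
      have hr1 : (1:ℝ) ≤ (r:ℝ) := by exact_mod_cast hr
      have h7 : a * (B:ℝ) ≤ a * ((r:ℝ) * B) := by nlinarith
      have h8 := add_le_add_left
        (mul_le_mul_of_nonneg_right h7 (pow_nonneg htB.le (r-1))) (a * (t-B)^r)
      have h9 : a*(t-B)^r + a*((r:ℝ)*B)*(t-B)^(r-1)
          = a*((t-B)^r + (r:ℝ)*B*(t-B)^(r-1)) := by ring
      linarith [h4, h8, h9.le, h9.ge]
    have hhalf : t / 2 ≤ t - B := by nlinarith
    have hpow : (t / 2) ^ (r-1) ≤ (t - B) ^ (r-1) := pow_le_pow_left₀ (by positivity) hhalf _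
    have hkey : C * t ^ (r-1) ≤ a * B * (t - B) ^ (r-1) := by
      have h5 : (t/2)^(r-1) = t^(r-1) / 2^(r-1) := div_pow t 2 (r-1)
      have h6 : C * t ^ (r-1) ≤ a * B * (t^(r-1) / 2^(r-1)) := by
        have h2pos : (0:ℝ) < 2 ^ (r-1) := by positivity
        have hmul := mul_le_mul_of_nonneg_right hB
          (le_of_lt (div_pos (pow_pos ht0 (r-1)) h2pos))
        calc C * t^(r-1) = C * 2^(r-1) * (t^(r-1)/2^(r-1)) := by field_simp
          _ ≤ a * B * (t^(r-1)/2^(r-1)) := hmul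
      calc C * t^(r-1) ≤ a * B * (t^(r-1)/2^(r-1)) := h6
        _ = a * B * (t/2)^(r-1) := by rw [h5]
        _ ≤ a * B * (t-B)^(r-1) :=
            mul_le_mul_of_nonneg_left hpow (mul_nonneg ha.le hB0.le)
    have hlow : a * t ^ r - C * t ^ (r-1) ≤ Q.eval t := by
      have := abs_le.mp habs
      linarith [this.1]
    linarith
  · -- upper bound
    have hb : a * t ^ r + a * B * t ^ (r - 1) ≤ a * (t + B) ^ r := by
      have := bern_pow hr ht0 (le_of_lt hB0)
      have h4 := mul_le_mul_of_nonneg_left this ha.le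
      have hr1 : (1:ℝ) ≤ (r:ℝ) := by exact_mod_cast hr
      have h7 : a * (B:ℝ) ≤ a * ((r:ℝ) * B) := by nlinarith
      have h8 := add_le_add_left
        (mul_le_mul_of_nonneg_right h7 (pow_nonneg ht0.le (r-1))) (a * t^r)
      have h9 : a*t^r + a*((r:ℝ)*B)*t^(r-1)
          = a*(t^r + (r:ℝ)*B*t^(r-1)) := by ring
      linarith [h4, h8, h9.le, h9.ge]
    have hup : Q.eval t ≤ a * t ^ r + C * t ^ (r-1) := by
      have := abs_le.mp habs
      linarith [this.2]
    have : C * t ^ (r-1) ≤ a * B * t ^ (r-1) :=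
      mul_le_mul_of_nonneg_right hCa (pow_nonneg ht0.le _)
    linarith



open Real Set MeasureTheory Filter

lemma tail_bounds (g : ℝ → ℝ) (hant : AntitoneOn g (Ici 1))
    (hnn : ∀ t : ℝ, 1 ≤ t → 0 ≤ g t)
    (hint : IntegrableOn g (Ioi 1) volume) (M : ℕ) (hM : 2 ≤ M) :
    Summable (fun k : ℕ => g ((k : ℝ) + M)) ∧
    (∑' k : ℕ, g ((k : ℝ) + M)) ≤ (∫ t in Ioi ((M:ℝ) - 1), g t) ∧
    (∫ t in Ioi (M:ℝ), g t) ≤ ∑' k : ℕ, g ((k : ℝ) + M) := by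
  have hM1 : (1:ℝ) ≤ (M:ℝ) - 1 := by
    have : (2:ℝ) ≤ M := by exact_mod_cast hM
    linarith
  have hMpos : (1:ℝ) ≤ (M:ℝ) := by linarith
  have hIoiM1 : Ioi ((M:ℝ) - 1) ⊆ Ioi 1 := Ioi_subset_Ioi (by linarith)
  have hintM1 : IntegrableOn g (Ioi ((M:ℝ) - 1)) volume := hint.mono_set hIoiM1
  have hintM : IntegrableOn g (Ioi (M:ℝ)) volume := hint.mono_set (Ioi_subset_Ioi (by linarith))
  have hae : 0 ≤ᵐ[volume.restrict (Ioi ((M:ℝ)-1))] g := by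
    filter_upwards [ae_restrict_mem measurableSet_Ioi] with t ht
    exact hnn t (le_of_lt (lt_of_le_of_lt hM1 ht))
  have hnonneg : ∀ k : ℕ, 0 ≤ g ((k:ℝ) + M) := fun k => hnn _ (by
    have : (0:ℝ) ≤ (k:ℝ) := Nat.cast_nonneg k
    linarith)
  -- upper bound on partial sums
  have hupper : ∀ n : ℕ, (∑ i ∈ Finset.range n, g ((i:ℝ) + M)) ≤ ∫ t in Ioi ((M:ℝ)-1), g t := by
    intro n
    have hant' : AntitoneOn g (Icc ((M:ℝ)-1) ((M:ℝ)-1 + n)) :=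
      hant.mono (fun y hy => le_trans hM1 hy.1)
    have h1 := hant'.sum_le_integral
    have h2 : (∑ i ∈ Finset.range n, g ((i:ℝ) + M))
        = ∑ i ∈ Finset.range n, g ((M:ℝ)-1 + (i + 1 : ℕ)) := by
      apply Finset.sum_congr rfl; intro i _; congr 1; push_cast; ring
    rw [h2]
    refine le_trans h1 ?_
    rw [intervalIntegral.integral_of_le (by linarith [Nat.cast_nonneg (α := ℝ) n])]
    exact setIntegral_mono_set hintM1 hae (HasSubset.Subset.eventuallyLE Ioc_subset_Ioi_self)
  have hsummable : Summable (fun k : ℕ => g ((k : ℝ) + M)) :=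
    summable_of_sum_range_le hnonneg hupper
  refine ⟨hsummable, tsum_le_of_sum_range_le hnonneg hupper, ?_⟩
  -- lower bound
  have hlow : ∀ n : ℕ, (∫ t in (M:ℝ)..((M:ℝ) + n), g t) ≤ ∑' k : ℕ, g ((k : ℝ) + M) := by
    intro n
    have hant' : AntitoneOn g (Icc ((M:ℝ)) ((M:ℝ) + n)) :=
      hant.mono (fun y hy => le_trans hMpos hy.1)
    have h1 := hant'.integral_le_sum
    have h2 : (∑ i ∈ Finset.range n, g ((M:ℝ) + i)) = ∑ i ∈ Finset.range n, g ((i:ℝ) + M) := by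
      apply Finset.sum_congr rfl; intro i _; congr 1; ring
    calc (∫ t in (M:ℝ)..((M:ℝ) + n), g t) ≤ ∑ i ∈ Finset.range n, g ((M:ℝ) + i) := h1
      _ = ∑ i ∈ Finset.range n, g ((i:ℝ) + M) := h2
      _ ≤ ∑' k : ℕ, g ((k : ℝ) + M) := hsummable.sum_le_tsum _ (fun i _ => hnonneg i)
  have htend : Tendsto (fun n : ℕ => ∫ t in (M:ℝ)..((M:ℝ) + n), g t) atTop
      (nhds (∫ t in Ioi (M:ℝ), g t)) :=
    intervalIntegral_tendsto_integral_Ioi _ hintM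
      (tendsto_atTop_add_const_left _ _ tendsto_natCast_atTop_atTop)
  exact le_of_tendsto htend (Eventually.of_forall hlow)



open Real Set MeasureTheory Filter

-- J = ∫ z^p/(e^z-1) = Gamma(1+p) * ∑ (n+1)^(-(1+p))
lemma mellin_zeta_integral {p : ℝ} (hp : 0 < p) :
    (∫ z in Ioi (0:ℝ), z ^ p / (Real.exp z - 1)) =
      Real.Gamma (1 + p) * ∑' n : ℕ, ((n : ℝ) + 1) ^ (-(1 + p)) := by
  have hp1 : 0 < 1 + p := by linarith
  set F : ℕ → ℝ → ℝ := fun n z => z ^ p * Real.exp (-(((n:ℝ) + 1) * z)) with hF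
  have hn1 : ∀ n : ℕ, (0:ℝ) < (n:ℝ) + 1 := fun n => by positivity
  -- integrability of each F n on Ioi 0
  have h_int : ∀ n : ℕ, Integrable (F n) (volume.restrict (Ioi (0:ℝ))) := by
    intro n
    have h0 := Real.GammaIntegral_convergent hp1
    have h1 : IntegrableOn (fun z : ℝ => Real.exp (-(((n:ℝ)+1) * z)) * (((n:ℝ)+1) * z) ^ ((1+p)-1))
        (Ioi (0:ℝ)) := by
      have := (integrableOn_Ioi_comp_mul_left_iff
        (fun z : ℝ => Real.exp (-z) * z ^ ((1+p)-1)) (0:ℝ) (hn1 n)).mpr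
      rw [mul_zero] at this
      exact this h0
    have h2 := h1.const_mul (((n:ℝ)+1) ^ (-((1+p)-1)))
    apply MeasureTheory.IntegrableOn.congr_fun h2 _ measurableSet_Ioi
    intro z hz
    have hz0 : (0:ℝ) < z := hz
    dsimp only [hF]
    rw [mul_rpow (hn1 n).le hz0.le]
    rw [show ((1:ℝ)+p)-1 = p by ring]
    have hc : ((n:ℝ)+1) ^ (-p) * ((n:ℝ)+1) ^ p = 1 := by
      rw [← Real.rpow_add (hn1 n)]; norm_num
    have hre : ((n:ℝ)+1) ^ (-p) * (Real.exp (-(((n:ℝ)+1)*z)) * (((n:ℝ)+1) ^ p * z ^ p))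
        = (((n:ℝ)+1) ^ (-p) * ((n:ℝ)+1) ^ p) * (z ^ p * Real.exp (-(((n:ℝ)+1)*z))) := by
      ring
    rw [hre, hc, one_mul]
  -- value of each integral
  have hval : ∀ n : ℕ, (∫ z in Ioi (0:ℝ), F n z)
      = ((n:ℝ) + 1) ^ (-(1+p)) * Real.Gamma (1 + p) := by
    intro n
    have := Real.integral_rpow_mul_exp_neg_mul_Ioi hp1 (hn1 n)
    rw [show ((1:ℝ)+p)-1 = p by ring] at this
    rw [hF]
    simp only []
    rw [this, one_div, ← Real.rpow_neg_one (((n:ℝ)+1)), ← Real.rpow_mul (hn1 n).le]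
    norm_num
  -- summability of the integrals of norms
  have hζ : Summable (fun n : ℕ => ((n : ℝ) + 1) ^ (-(1 + p))) := by
    have h := (Real.summable_nat_rpow (p := -(1+p))).mpr (by linarith)
    have h2 := (summable_nat_add_iff 1).mpr h
    apply h2.congr
    intro n
    push_cast
    rfl
  have hnorm : ∀ n : ℕ, (∫ z in Ioi (0:ℝ), ‖F n z‖)
      = ((n:ℝ) + 1) ^ (-(1+p)) * Real.Gamma (1 + p) := by
    intro n
    rw [← hval n]
    apply setIntegral_congr_fun measurableSet_Ioi
    intro z hz
    have hz0 : (0:ℝ) < z := hz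
    show ‖F n z‖ = F n z
    rw [Real.norm_eq_abs, abs_of_nonneg]
    rw [hF]
    positivity
  have hsum : Summable (fun n : ℕ => ∫ z in Ioi (0:ℝ), ‖F n z‖) := by
    simp_rw [hnorm]
    exact hζ.mul_right _
  have hHasSum := MeasureTheory.hasSum_integral_of_summable_integral_norm h_int hsum
  -- identify the integrand tsum
  have hcongr : (∫ z in Ioi (0:ℝ), ∑' n : ℕ, F n z)
      = ∫ z in Ioi (0:ℝ), z ^ p / (Real.exp z - 1) := by
    apply setIntegral_congr_fun measurableSet_Ioi
    intro z hz
    have hz0 : (0:ℝ) < z := hz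
    have hq1 : Real.exp (-z) < 1 := Real.exp_lt_one_iff.mpr (by linarith)
    have hq0 : (0:ℝ) ≤ Real.exp (-z) := (Real.exp_pos _).le
    have hterm : ∀ n : ℕ, F n z = z ^ p * (Real.exp (-z)) ^ (n+1) := by
      intro n
      rw [hF]
      simp only []
      congr 1
      rw [← Real.exp_nat_mul]
      congr 1
      push_cast
      ring
    calc (∑' n : ℕ, F n z) = ∑' n : ℕ, z ^ p * (Real.exp (-z)) ^ (n+1) := by
          exact tsum_congr hterm
      _ = z ^ p * ∑' n : ℕ, (Real.exp (-z)) ^ (n+1) := tsum_mul_left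
      _ = z ^ p * ((∑' n : ℕ, (Real.exp (-z)) ^ n) * Real.exp (-z)) := by
          congr 1
          rw [← tsum_mul_right]
          exact tsum_congr fun n => (pow_succ _ n)
      _ = z ^ p * ((1 - Real.exp (-z))⁻¹ * Real.exp (-z)) := by
          rw [tsum_geometric_of_lt_one hq0 hq1]
      _ = z ^ p / (Real.exp z - 1) := by
          have he : Real.exp z ≠ 0 := (Real.exp_pos z).ne'
          have he1' : (1:ℝ) < Real.exp z := by
            have h := Real.exp_lt_exp.mpr hz0
            rwa [Real.exp_zero] at h
          have he1 : Real.exp z - 1 ≠ 0 := by linarith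
          rw [Real.exp_neg, div_eq_mul_inv]
          congr 1
          rw [← mul_inv]
          congr 1
          field_simp
  rw [← hcongr, ← hHasSum.tsum_eq]
  rw [tsum_congr hval, tsum_mul_right]
  ring



open Real Set MeasureTheory Filter

lemma g_integrable {r : ℕ} (hr : 1 ≤ r) {a x : ℝ} (ha : 0 < a) (hx : 0 < x) :
    IntegrableOn (fun t : ℝ => (a * t ^ r) / (Real.exp (a * t ^ r * x) - 1)) (Ioi 0) volume := by
  set g : ℝ → ℝ := fun t => (a * t ^ r) / (Real.exp (a * t ^ r * x) - 1) with hg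
  have hcont : ContinuousOn g (Ioi 0) := by
    apply ContinuousOn.div
    · exact (continuous_const.mul (continuous_pow r)).continuousOn
    · exact ((continuous_const.mul (continuous_pow r)).mul continuous_const).rexp.sub
        continuous_const |>.continuousOn
    · intro t ht
      have ht0 : (0:ℝ) < t := ht
      exact (exp_sub_one_pos' (by positivity)).ne'
  have hgnn : ∀ t : ℝ, 0 < t → 0 ≤ g t := fun t ht => (h_pos hx (by positivity)).le
  have hmeas1 : AEStronglyMeasurable g (volume.restrict (Ioc (0:ℝ) 1)) :=
    (hcont.mono Ioc_subset_Ioi_self).aestronglyMeasurable measurableSet_Ioc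
  have h1 : IntegrableOn g (Ioc (0:ℝ) 1) volume := by
    apply Integrable.mono' (integrableOn_const (C := 1/x) measure_Ioc_lt_top.ne) hmeas1
    filter_upwards [ae_restrict_mem measurableSet_Ioc] with t ht
    have ht0 : (0:ℝ) < t := ht.1
    rw [Real.norm_eq_abs, abs_of_nonneg (hgnn t ht0)]
    exact h_le_inv hx (by positivity : (0:ℝ) < a * t ^ r)
  have h2 : IntegrableOn g (Ioi (1:ℝ)) volume := by
    have hmaj : IntegrableOn (fun t : ℝ => (27 / (x ^ 3 * a ^ 2)) * t ^ (-2 : ℝ)) (Ioi 1) volume :=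
      (integrableOn_Ioi_rpow_of_lt (by norm_num) one_pos).const_mul _
    apply Integrable.mono' hmaj ((hcont.mono (Ioi_subset_Ioi one_pos.le)).aestronglyMeasurable
      measurableSet_Ioi)
    filter_upwards [ae_restrict_mem measurableSet_Ioi] with t ht
    have ht1 : (1:ℝ) ≤ t := le_of_lt ht
    have ht0 : (0:ℝ) < t := lt_of_lt_of_le one_pos ht1
    rw [Real.norm_eq_abs, abs_of_nonneg (hgnn t ht0)]
    have hb := h_le_cube hx (by positivity : (0:ℝ) < a * t ^ r)
    refine hb.trans ?_
    have hp1 : t ^ 2 ≤ t ^ (2 * r) := pow_le_pow_right₀ ht1 (by omega)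
    have ht2 : t ^ (-2:ℝ) = (t ^ 2)⁻¹ := by
      rw [Real.rpow_neg ht0.le, Real.rpow_two]
    have hrhs : 27/(x^3*a^2) * (t^2)⁻¹ = 27/(x^3*a^2*t^2) := by field_simp
    rw [ht2, hrhs]
    apply div_le_div_of_nonneg_left (by norm_num : (0:ℝ) ≤ 27) (by positivity)
    have hexp : (a * t ^ r) ^ 2 = a ^ 2 * t ^ (2 * r) := by
      rw [mul_pow, ← pow_mul, mul_comm r 2]
    rw [hexp]
    calc x^3*a^2*t^2 ≤ x^3*a^2*t^(2*r) := by
          have := mul_le_mul_of_nonneg_left hp1 (by positivity : (0:ℝ) ≤ x^3*a^2)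
          linarith [this]
      _ = x^3*(a^2*t^(2*r)) := by ring
  have := h1.union h2
  rwa [Ioc_union_Ioi_eq_Ioi one_pos.le] at this

lemma g_integral {r : ℕ} (hr : 1 ≤ r) {a x : ℝ} (ha : 0 < a) (hx : 0 < x) :
    (∫ t in Ioi (0:ℝ), (a * t ^ r) / (Real.exp (a * t ^ r * x) - 1)) =
      Real.Gamma (1 + 1/(r:ℝ)) * (∑' n : ℕ, ((n:ℝ)+1) ^ (-(1 + 1/(r:ℝ)))) /
        ((r:ℝ) * a ^ ((1:ℝ)/r) * x ^ (1 + (1:ℝ)/r)) := by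
  have hr0 : (0:ℝ) < (r:ℝ) := by exact_mod_cast hr
  have hrne : (r:ℝ) ≠ 0 := hr0.ne'
  have hax : (0:ℝ) < a * x := mul_pos ha hx
  set g₁ : ℝ → ℝ := fun y => (1/(r:ℝ)) * y ^ ((1:ℝ)/r - 1) * ((a*y)/(Real.exp (a*y*x) - 1))
    with hg₁
  set g₂ : ℝ → ℝ := fun z => (1/(r:ℝ)) * (z/(a*x)) ^ ((1:ℝ)/r - 1) *
    ((z/x)/(Real.exp z - 1)) with hg₂
  -- Step A+B : ∫ g = ∫ g₁
  have stepAB : (∫ t in Ioi (0:ℝ), (a * t ^ r) / (Real.exp (a * t ^ r * x) - 1))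
      = ∫ y in Ioi (0:ℝ), g₁ y := by
    rw [← integral_comp_rpow_Ioi_of_pos (g := g₁) hr0]
    apply setIntegral_congr_fun measurableSet_Ioi
    intro t ht
    have ht0 : (0:ℝ) < t := ht
    show a * t ^ r / (Real.exp (a * t ^ r * x) - 1) = ((r:ℝ) * t ^ ((r:ℝ) - 1)) • g₁ (t ^ ((r:ℕ):ℝ))
    rw [smul_eq_mul, hg₁]
    dsimp only
    symm
    rw [← Real.rpow_natCast t r]
    rw [← Real.rpow_mul ht0.le]
    rw [show (r:ℝ)*((1:ℝ)/r - 1) = 1 - (r:ℝ) by field_simp]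
    have hmerge : t ^ ((r:ℝ)-1) * t ^ (1-(r:ℝ)) = 1 := by
      rw [← Real.rpow_add ht0, show ((r:ℝ)-1)+(1-(r:ℝ)) = 0 by ring, Real.rpow_zero]
    calc (r:ℝ) * t ^ ((r:ℝ)-1) * ((1/(r:ℝ)) * t ^ (1-(r:ℝ)) *
          ((a * t ^ ((r:ℕ):ℝ))/(Real.exp (a * t ^ ((r:ℕ):ℝ) * x) - 1)))
        = ((r:ℝ) * (1/(r:ℝ))) * (t ^ ((r:ℝ)-1) * t ^ (1-(r:ℝ))) *
          ((a * t ^ ((r:ℕ):ℝ))/(Real.exp (a * t ^ ((r:ℕ):ℝ) * x) - 1)) := by ring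
      _ = (a * t ^ ((r:ℕ):ℝ))/(Real.exp (a * t ^ ((r:ℕ):ℝ) * x) - 1) := by
          rw [hmerge, mul_one_div_cancel hrne]; ring
  -- Step C+D : ∫ g₁ = (a*x)⁻¹ * ∫ g₂
  have stepCD : (∫ y in Ioi (0:ℝ), g₁ y) = (a*x)⁻¹ * ∫ z in Ioi (0:ℝ), g₂ z := by
    have hcomp : (∫ y in Ioi (0:ℝ), g₁ y) = ∫ y in Ioi (0:ℝ), g₂ ((a*x) * y) := by
      apply setIntegral_congr_fun measurableSet_Ioi
      intro y hy
      have hy0 : (0:ℝ) < y := hy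
      show g₁ y = g₂ (a*x*y)
      rw [hg₁, hg₂]
      dsimp only
      rw [mul_div_cancel_left₀ _ hax.ne']
      rw [show a*x*y/x = a*y by field_simp]
      rw [show a*x*y = a*y*x by ring]
    rw [hcomp]
    have := integral_comp_mul_left_Ioi g₂ 0 hax
    rw [mul_zero] at this
    rw [this, smul_eq_mul]
  -- Step E : ∫ g₂ = const * J
  have h1 : ((a*x) ^ ((1:ℝ)/r - 1))⁻¹ = (a*x) ^ (1 - (1:ℝ)/r) := by
    rw [← Real.rpow_neg hax.le, show -((1:ℝ)/r - 1) = 1 - (1:ℝ)/r by ring]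
  have stepE : (∫ z in Ioi (0:ℝ), g₂ z)
      = ((a*x) ^ (1 - (1:ℝ)/r) / ((r:ℝ) * x)) * ∫ z in Ioi (0:ℝ), z ^ ((1:ℝ)/r) / (Real.exp z - 1) := by
    rw [← MeasureTheory.integral_const_mul]
    apply setIntegral_congr_fun measurableSet_Ioi
    intro z hz
    have hz0 : (0:ℝ) < z := hz
    show g₂ z = (a*x) ^ (1 - (1:ℝ)/r) / ((r:ℝ) * x) * (z ^ ((1:ℝ)/r) / (Real.exp z - 1))
    have h2 : z ^ ((1:ℝ)/r - 1) * z = z ^ ((1:ℝ)/r) := by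
      rw [← Real.rpow_add_one hz0.ne']
      congr 1; ring
    have hexpz : Real.exp z - 1 ≠ 0 := (exp_sub_one_pos' hz0).ne'
    have hA : (0:ℝ) < (a*x) ^ ((1:ℝ)/r - 1) := Real.rpow_pos_of_pos hax _
    rw [hg₂]
    dsimp only
    rw [Real.div_rpow hz0.le hax.le, ← h1, ← h2]
    set A := (a*x) ^ ((1:ℝ)/r - 1) with hA'
    set Z := z ^ ((1:ℝ)/r - 1) with hZ'
    field_simp
  rw [stepAB, stepCD, stepE, mellin_zeta_integral (by positivity : (0:ℝ) < (1:ℝ)/r)]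
  set S := ∑' n : ℕ, ((n:ℝ)+1) ^ (-(1 + 1/(r:ℝ))) with hS
  set G := Real.Gamma (1 + 1/(r:ℝ)) with hG
  set P := a ^ ((1:ℝ)/r) with hP
  set Q := x ^ ((1:ℝ)/r) with hQ
  have hc1 : (a*x)⁻¹ * ((a*x) ^ (1 - (1:ℝ)/r)) = (a*x) ^ (-((1:ℝ)/r)) := by
    rw [← Real.rpow_neg_one (a*x), ← Real.rpow_add hax]
    congr 1; ring
  have hc2 : (a*x) ^ (-((1:ℝ)/r)) = a ^ (-((1:ℝ)/r)) * x ^ (-((1:ℝ)/r)) :=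
    Real.mul_rpow ha.le hx.le
  have ha1 : a ^ (-((1:ℝ)/r)) = P⁻¹ := by rw [Real.rpow_neg ha.le, hP]
  have hx1 : x ^ (-((1:ℝ)/r)) = Q⁻¹ := by rw [Real.rpow_neg hx.le, hQ]
  have hx2 : x ^ (1 + (1:ℝ)/r) = x * Q := by
    rw [Real.rpow_add hx, Real.rpow_one, hQ]
  have hPpos : (0:ℝ) < P := Real.rpow_pos_of_pos ha _
  have hQpos : (0:ℝ) < Q := Real.rpow_pos_of_pos hx _
  have key : (a*x)⁻¹ * ((a*x) ^ (1 - (1:ℝ)/r) / ((r:ℝ)*x) * (G * S))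
      = ((a*x)⁻¹ * ((a*x) ^ (1 - (1:ℝ)/r))) / ((r:ℝ)*x) * (G*S) := by ring
  rw [key, hc1, hc2, ha1, hx1, hx2]
  have hfin : P⁻¹ * Q⁻¹ / ((r:ℝ)*x) = ((r:ℝ) * P * (x * Q))⁻¹ := by
    rw [div_eq_mul_inv, ← mul_inv, ← mul_inv]
    congr 1; ring
  rw [hfin, div_eq_mul_inv, mul_comm]



open Real Set MeasureTheory Filter

lemma zeta_gamma_ofReal {r : ℕ} (hr : 1 ≤ r) :
    riemannZeta (1 + 1 / (r : ℂ)) * Complex.Gamma (1 + 1 / (r : ℂ)) =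
      ((∑' n : ℕ, ((n:ℝ)+1) ^ (-(1 + 1/(r:ℝ)))) * Real.Gamma (1 + 1/(r:ℝ)) : ℝ) := by
  have hr0 : (0:ℝ) < (r:ℝ) := by exact_mod_cast hr
  have hcast : (1 + 1 / (r : ℂ)) = ((1 + 1/(r:ℝ) : ℝ) : ℂ) := by
    push_cast
    ring
  have hre : 1 < (((1 + 1/(r:ℝ) : ℝ)) : ℂ).re := by
    rw [Complex.ofReal_re]
    have : 0 < 1/(r:ℝ) := by positivity
    linarith
  rw [hcast, Complex.Gamma_ofReal, zeta_eq_tsum_one_div_nat_add_one_cpow hre]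
  have hterm : ∀ n : ℕ, (1 : ℂ) / ((n:ℂ) + 1) ^ (((1 + 1/(r:ℝ) : ℝ)) : ℂ)
      = ((((n:ℝ)+1) ^ (-(1 + 1/(r:ℝ))) : ℝ) : ℂ) := by
    intro n
    have hn0 : (0:ℝ) ≤ (n:ℝ) + 1 := by positivity
    have h1 : ((n:ℂ) + 1) = (((n:ℝ) + 1 : ℝ) : ℂ) := by push_cast; ring
    rw [h1, ← Complex.ofReal_cpow hn0, Real.rpow_neg hn0, Complex.ofReal_inv, one_div]
  rw [tsum_congr hterm, ← Complex.ofReal_tsum, ← Complex.ofReal_mul]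



open Real Set MeasureTheory Filter Polynomial

theorem stmt14 (r : ℕ) (hr : 1 ≤ r) (P : Polynomial ℚ) (hPdeg : P.natDegree = r)
    (hPlc : 0 < P.leadingCoeff)
    (f : ℤ → ℤ) (hfP : ∀ ℓ : ℤ, (f ℓ : ℚ) = P.eval (ℓ : ℚ))
    (hfpos : ∀ ℓ : ℤ, 1 ≤ ℓ → 0 < f ℓ)
    (hfprime : ∀ p : ℕ, p.Prime → ∃ ℓ : ℤ, ¬ ((p : ℤ) ∣ f ℓ)) :
    ∃ C x₀ : ℝ, 0 < C ∧ 0 < x₀ ∧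
      ∀ x : ℝ, 0 < x → x < x₀ →
        ‖((∑' ℓ : ℕ, (f ((ℓ : ℤ) + 1) : ℝ) /
              (Real.exp ((f ((ℓ : ℤ) + 1) : ℝ) * x) - 1) : ℝ) : ℂ) -
            riemannZeta (1 + 1 / (r : ℂ)) * Complex.Gamma (1 + 1 / (r : ℂ)) /
              (((r : ℝ) * (P.leadingCoeff : ℝ) ^ ((1 : ℝ) / r) *
                x ^ (1 + (1 : ℝ) / r) : ℝ) : ℂ)‖ ≤
          C * x ^ (-1 - (1 : ℝ) / (2 * r)) := by
  classical
  set a : ℝ := (P.leadingCoeff : ℝ) with ha_def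
  have ha : 0 < a := by rw [ha_def]; exact_mod_cast hPlc
  set Pr : Polynomial ℝ := P.map (algebraMap ℚ ℝ) with hPr_def
  have hinj : Function.Injective (algebraMap ℚ ℝ) := (algebraMap ℚ ℝ).injective
  have hPr_deg : Pr.natDegree = r := by
    rw [hPr_def, Polynomial.natDegree_map_eq_of_injective hinj, hPdeg]
  have hPr_lc : Pr.leadingCoeff = a := by
    rw [hPr_def, Polynomial.leadingCoeff_map_of_injective hinj, ha_def]
    exact eq_ratCast (algebraMap ℚ ℝ) P.leadingCoeff
  have hPr_lc_pos : 0 < Pr.leadingCoeff := by rw [hPr_lc]; exact ha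
  have hPrEval : ∀ m : ℤ, Pr.eval ((m:ℝ)) = ((f m : ℤ) : ℝ) := by
    intro m
    have h1 : ((m:ℚ):ℝ) = (m:ℝ) := by push_cast; rfl
    have h2 : Pr.eval ((algebraMap ℚ ℝ) (m:ℚ)) = (algebraMap ℚ ℝ) (P.eval (m:ℚ)) := by
      rw [hPr_def, Polynomial.eval_map, Polynomial.eval₂_hom]
    rw [eq_ratCast (algebraMap ℚ ℝ) (m:ℚ), h1] at h2
    rw [h2, ← hfP m, eq_ratCast]
    push_cast; rfl
  obtain ⟨B, hB1, hsand⟩ := poly_sandwich Pr hr hPr_deg hPr_lc_pos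
  rw [hPr_lc] at hsand
  set N : ℕ := 2 * B + 1 with hN_def
  set M₁ : ℕ := N + 1 + B with hM₁_def
  set M₂ : ℕ := B + 2 with hM₂_def
  refine ⟨(N : ℝ) + M₁, 1, by positivity, one_pos, ?_⟩
  intro x hx hx1
  -- real functions
  set u : ℕ → ℝ := fun ℓ => ((f ((ℓ : ℤ) + 1) : ℤ) : ℝ) with hu_def
  set w : ℕ → ℝ := fun ℓ => u ℓ / (Real.exp (u ℓ * x) - 1) with hw_def
  set g : ℝ → ℝ := fun t => (a * t ^ r) / (Real.exp (a * t ^ r * x) - 1) with hg_def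
  have hu1 : ∀ ℓ : ℕ, (1:ℝ) ≤ u ℓ := by
    intro ℓ
    have h0 := hfpos ((ℓ : ℤ) + 1) (by omega)
    have h1 : (1:ℤ) ≤ f ((ℓ : ℤ) + 1) := h0
    show (1:ℝ) ≤ ((f ((ℓ : ℤ) + 1) : ℤ) : ℝ)
    exact_mod_cast h1
  have hu0 : ∀ ℓ : ℕ, (0:ℝ) < u ℓ := fun ℓ => lt_of_lt_of_le one_pos (hu1 ℓ)
  have hw_pos : ∀ ℓ : ℕ, 0 < w ℓ := fun ℓ => h_pos hx (hu0 ℓ)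
  have hw_le : ∀ ℓ : ℕ, w ℓ ≤ 1 / x := fun ℓ => h_le_inv hx (hu0 ℓ)
  -- g properties
  have hg_ant : AntitoneOn g (Ici (1:ℝ)) := by
    intro t ht s hs hts
    have ht0 : (0:ℝ) < t := lt_of_lt_of_le one_pos ht
    exact h_anti hx (by positivity)
      (mul_le_mul_of_nonneg_left (pow_le_pow_left₀ ht0.le hts r) ha.le)
  have hg_nn : ∀ t : ℝ, 1 ≤ t → 0 ≤ g t := by
    intro t ht
    have ht0 : (0:ℝ) < t := lt_of_lt_of_le one_pos ht
    exact (h_pos hx (by positivity)).le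
  have hg_int : IntegrableOn g (Ioi (0:ℝ)) volume := g_integrable hr ha hx
  have hg_int1 : IntegrableOn g (Ioi (1:ℝ)) volume := hg_int.mono_set (Ioi_subset_Ioi one_pos.le)
  obtain ⟨hsumM₁, hubM₁, hlbM₁⟩ := tail_bounds g hg_ant hg_nn hg_int1 M₁ (by omega)
  obtain ⟨hsumM₂, hubM₂, hlbM₂⟩ := tail_bounds g hg_ant hg_nn hg_int1 M₂ (by omega)
  -- sandwich of tail terms
  have hsand' : ∀ k : ℕ, g ((k:ℝ) + M₁) ≤ w (k + N) ∧ w (k + N) ≤ g ((k:ℝ) + M₂) := by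
    intro k
    set t : ℝ := (k:ℝ) + N + 1 with ht_def
    have ht2B : 2 * (B:ℝ) ≤ t := by
      rw [ht_def, hN_def]
      push_cast
      linarith [Nat.cast_nonneg (α := ℝ) k]
    obtain ⟨hlow, hup⟩ := hsand t ht2B
    have huval : Pr.eval t = u (k + N) := by
      have : t = (((k:ℤ) + N + 1 : ℤ) : ℝ) := by rw [ht_def]; push_cast; ring
      rw [this, hPrEval]
      rw [hu_def]
      show ((f (((k:ℤ) + N + 1 : ℤ)) : ℤ) : ℝ) = ((f ((((k + N : ℕ)):ℤ) + 1) : ℤ) : ℝ)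
      congr 2 <;> omega
    rw [huval] at hlow hup
    have htB0 : (0:ℝ) < t - B := by
      have : (1:ℝ) ≤ (B:ℝ) := by exact_mod_cast hB1
      linarith
    constructor
    · have h1 : w (k + N) = u (k+N) / (Real.exp (u (k+N) * x) - 1) := rfl
      have h2 : g ((k:ℝ) + M₁) = (a * ((k:ℝ) + M₁) ^ r) /
          (Real.exp (a * ((k:ℝ) + M₁) ^ r * x) - 1) := rfl
      have h3 : (k:ℝ) + M₁ = t + B := by rw [ht_def, hM₁_def]; push_cast; ring
      rw [h1, h2, h3]
      exact h_anti hx (hu0 (k+N)) hup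
    · have h3 : (k:ℝ) + M₂ = t - B := by rw [ht_def, hM₂_def, hN_def]; push_cast; ring
      show w (k+N) ≤ (a * ((k:ℝ) + M₂) ^ r) / (Real.exp (a * ((k:ℝ) + M₂) ^ r * x) - 1)
      rw [h3]
      exact h_anti hx (by positivity) hlow
  -- summability of w
  have hsum_tail : Summable (fun k : ℕ => w (k + N)) := by
    apply Summable.of_nonneg_of_le (fun k => (hw_pos _).le) (fun k => (hsand' k).2) hsumM₂
  have hw_sum : Summable w := (summable_nat_add_iff N).mp hsum_tail
  set T : ℝ := ∑' ℓ : ℕ, w ℓ with hT_def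
  have hsplit : (∑ i ∈ Finset.range N, w i) + (∑' k : ℕ, w (k + N)) = T :=
    hw_sum.sum_add_tsum_nat_add N
  set I : ℝ := ∫ t in Ioi (0:ℝ), g t with hI_def
  -- upper bound for T
  have hTle : T ≤ I + N / x := by
    have h1 : (∑ i ∈ Finset.range N, w i) ≤ (N:ℝ) / x := by
      calc (∑ i ∈ Finset.range N, w i) ≤ ∑ i ∈ Finset.range N, (1/x) :=
            Finset.sum_le_sum (fun i _ => hw_le i)
        _ = (N:ℝ) / x := by
            rw [Finset.sum_const, Finset.card_range, nsmul_eq_mul]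
            ring
    have h2 : (∑' k : ℕ, w (k + N)) ≤ I := by
      have h3 : (∑' k : ℕ, w (k + N)) ≤ ∑' k : ℕ, g ((k:ℝ) + M₂) :=
        hsum_tail.tsum_le_tsum (fun k => (hsand' k).2) hsumM₂
      have h4 : (∫ t in Ioi ((M₂:ℝ) - 1), g t) ≤ I := by
        rw [hI_def]
        apply setIntegral_mono_set hg_int
        · filter_upwards [ae_restrict_mem measurableSet_Ioi] with t ht
          have ht0 : (0:ℝ) < t := ht
          exact (h_pos hx (by positivity : (0:ℝ) < a * t ^ r)).le
        · apply HasSubset.Subset.eventuallyLE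
          apply Ioi_subset_Ioi
          have : (2:ℝ) ≤ (M₂:ℝ) := by exact_mod_cast (by omega : 2 ≤ M₂)
          linarith
      linarith [hubM₂]
    linarith
  -- lower bound for T
  have hTge : I - (M₁:ℝ) / x ≤ T := by
    have h2 : (∑' k : ℕ, g ((k:ℝ) + M₁)) ≤ ∑' k : ℕ, w (k + N) :=
      hsumM₁.tsum_le_tsum (fun k => (hsand' k).1) hsum_tail
    have h5 : I = (∫ t in Ioc (0:ℝ) (M₁:ℝ), g t) + ∫ t in Ioi ((M₁:ℝ)), g t := by
      rw [hI_def, ← Ioc_union_Ioi_eq_Ioi (by positivity : (0:ℝ) ≤ (M₁:ℝ))]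
      apply MeasureTheory.setIntegral_union
      · exact Set.Ioc_disjoint_Ioi le_rfl
      · exact measurableSet_Ioi
      · exact hg_int.mono_set Ioc_subset_Ioi_self
      · exact hg_int.mono_set (Ioi_subset_Ioi (by positivity))
    have h6 : (∫ t in Ioc (0:ℝ) (M₁:ℝ), g t) ≤ (M₁:ℝ) / x := by
      have hb := MeasureTheory.norm_setIntegral_le_of_norm_le_const
        (μ := volume) (s := Ioc (0:ℝ) (M₁:ℝ)) (C := 1/x) (f := g)
        (by rw [Real.volume_Ioc]; exact ENNReal.ofReal_lt_top)
        (fun t ht => ?_)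
      · have : (volume (Ioc (0:ℝ) (M₁:ℝ))).toReal = (M₁:ℝ) := by
          rw [Real.volume_Ioc, sub_zero, ENNReal.toReal_ofReal (by positivity)]
        rw [measureReal_def, this] at hb
        calc (∫ t in Ioc (0:ℝ) (M₁:ℝ), g t) ≤ ‖∫ t in Ioc (0:ℝ) (M₁:ℝ), g t‖ := by
              rw [Real.norm_eq_abs]; exact le_abs_self _
          _ ≤ 1/x * (M₁:ℝ) := hb
          _ = (M₁:ℝ)/x := by ring
      · have ht0 : (0:ℝ) < t := ht.1
        rw [Real.norm_eq_abs, abs_of_nonneg (h_pos hx (by positivity : (0:ℝ) < a * t^r)).le]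
        exact h_le_inv hx (by positivity)
    have h7 : 0 ≤ (∑ i ∈ Finset.range N, w i) :=
      Finset.sum_nonneg (fun i _ => (hw_pos i).le)
    linarith [hlbM₁]
  -- the exact value of I
  have hIval : I = Real.Gamma (1 + 1/(r:ℝ)) * (∑' n : ℕ, ((n:ℝ)+1) ^ (-(1 + 1/(r:ℝ)))) /
      ((r:ℝ) * a ^ ((1:ℝ)/r) * x ^ (1 + (1:ℝ)/r)) := g_integral hr ha hx
  -- reduce the complex expression
  have hred : ((T : ℝ) : ℂ) -
      riemannZeta (1 + 1 / (r : ℂ)) * Complex.Gamma (1 + 1 / (r : ℂ)) /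
        (((r : ℝ) * a ^ ((1 : ℝ) / r) * x ^ (1 + (1 : ℝ) / r) : ℝ) : ℂ)
      = ((T - I : ℝ) : ℂ) := by
    rw [zeta_gamma_ofReal hr, ← Complex.ofReal_div, ← Complex.ofReal_sub, hIval]
    congr 2
    ring
  rw [hred, Complex.norm_real, Real.norm_eq_abs]
  have habs : |T - I| ≤ ((N:ℝ) + M₁) / x := by
    rw [abs_le]
    constructor
    · have h1 : (0:ℝ) ≤ (N:ℝ)/x := by positivity
      have h2 : ((N:ℝ) + M₁)/x = (N:ℝ)/x + (M₁:ℝ)/x := by ring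
      rw [h2]; linarith
    · have h1 : (0:ℝ) ≤ (M₁:ℝ)/x := by positivity
      have h2 : ((N:ℝ) + M₁)/x = (N:ℝ)/x + (M₁:ℝ)/x := by ring
      rw [h2]; linarith
  refine habs.trans ?_
  have hxp : (1:ℝ)/x = x ^ (-1 : ℝ) := by
    rw [Real.rpow_neg_one]
    ring
  have hmono : x ^ (-1:ℝ) ≤ x ^ (-1 - (1:ℝ)/(2*r)) := by
    apply Real.rpow_le_rpow_of_exponent_ge hx hx1.le
    have : (0:ℝ) < (1:ℝ)/(2*r) := by positivity
    linarith
  calc ((N:ℝ) + M₁) / x = ((N:ℝ) + M₁) * (1/x) := by ring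
    _ = ((N:ℝ) + M₁) * x ^ (-1:ℝ) := by rw [hxp]
    _ ≤ ((N:ℝ) + M₁) * x ^ (-1 - (1:ℝ)/(2*r)) :=
        mul_le_mul_of_nonneg_left hmono (by positivity)
end
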